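/- arXiv:2104.14431 — 8 statements merged into one kernel-verified Lean document; each statement's English description precedes it below -/
import Mathlib

section
/- Let 𝒳 be a type, W : 𝒳 → PMF(ℕ) a channel, and P a finitely supported pmf on 𝒳 with induced output pmf Q(k) = Σ_{x} P(x)·W(x)(k). Suppose η ∈ (0,1] satisfies the strong data-processing inequality: for all pmfs P₁, P₂ on 𝒳 with 0 < KL(P₁‖P₂) < ∞, the induced outputs satisfy KL(Q₁‖Q₂) ≤ η·KL(P₁‖P₂). Suppose C ∈ ℝ is such that KL(W(x) ‖ Q) = C for every x in the support of P. Then P(x) ≤ exp(−C/η) for every x in the support of P. -/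
open Real ENNReal
open scoped Classical

/-- Kullback–Leibler divergence between two pmfs (natural log), valued in `ℝ≥0∞`:
`+∞` when absolute continuity fails or the defining sum does not converge. -/
noncomputable def klPMF {α : Type*} (μ ν : PMF α) : ℝ≥0∞ :=
  if μ.support ⊆ ν.support ∧
      Summable (fun a => (μ a).toReal * Real.log ((μ a).toReal / (ν a).toReal))
  then ENNReal.ofReal (∑' a, (μ a).toReal * Real.log ((μ a).toReal / (ν a).toReal))
  else ⊤

lemma klPMF_self {α : Type*} (μ : PMF α) : klPMF μ μ = 0 := by
  have hf : (fun a => (μ a).toReal * Real.log ((μ a).toReal / (μ a).toReal)) = fun _ => 0 := by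
    funext a
    rcases eq_or_ne ((μ a).toReal) 0 with h | h
    · simp [h]
    · rw [div_self h, Real.log_one, mul_zero]
  rw [klPMF, if_pos]
  · rw [hf]; simp
  · exact ⟨subset_rfl, by rw [hf]; exact summable_zero⟩

lemma klPMF_pure_left {α : Type*} (P : PMF α) (x : α) (hx : x ∈ P.support) :
    klPMF (PMF.pure x) P = ENNReal.ofReal (-Real.log (P x).toReal) := by
  have hzero : ∀ a, a ≠ x →
      ((PMF.pure x) a).toReal * Real.log (((PMF.pure x) a).toReal / (P a).toReal) = 0 := by
    intro a ha
    rw [PMF.pure_apply_of_ne _ _ ha]; simp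
  have hsum : Summable (fun a =>
      ((PMF.pure x) a).toReal * Real.log (((PMF.pure x) a).toReal / (P a).toReal)) :=
    summable_of_ne_finset_zero (s := {x}) (fun a ha => hzero a (by simpa using ha))
  rw [klPMF, if_pos]
  · congr 1
    rw [tsum_eq_single x (fun b hb => hzero b hb)]
    rw [PMF.pure_apply_self]
    simp only [ENNReal.toReal_one, one_mul, one_div, Real.log_inv]
  · refine ⟨?_, hsum⟩
    intro a ha
    rw [PMF.mem_support_iff, PMF.pure_apply] at ha
    by_cases h : a = x
    · subst h; exact hx
    · simp [h] at ha

/-- If `η ∈ (0,1]` satisfies the strong data-processing inequality for the channel `W`, and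
`KL(W(x) ‖ Q) = C` for every `x` in the support of a finitely supported input pmf `P`
(where `Q` is the induced output pmf), then `P(x) ≤ exp (−C/η)` on the support of `P`. -/
theorem mass_upper_bound_of_SDPI {𝒳 : Type*} (W : 𝒳 → PMF ℕ) (P : PMF 𝒳)
    (hPfin : P.support.Finite) (η : ℝ) (hη0 : 0 < η) (hη1 : η ≤ 1)
    (hSDPI : ∀ P₁ P₂ : PMF 𝒳, 0 < klPMF P₁ P₂ → klPMF P₁ P₂ < ⊤ →
      klPMF (P₁.bind W) (P₂.bind W) ≤ ENNReal.ofReal η * klPMF P₁ P₂)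
    (C : ℝ) (hC : ∀ x ∈ P.support, klPMF (W x) (P.bind W) = ENNReal.ofReal C) :
    ∀ x ∈ P.support, (P x).toReal ≤ Real.exp (-(C / η)) := by
  intro x hx
  set p : ℝ := (P x).toReal with hp
  have hp0 : 0 < p :=
    ENNReal.toReal_pos (PMF.mem_support_iff P x |>.mp hx) (P.apply_ne_top x)
  have hp1 : p ≤ 1 := by
    rw [hp]
    simpa using ENNReal.toReal_mono (by simp) (P.coe_le_one x)
  rcases lt_or_eq_of_le hp1 with hlt | heq
  · -- p < 1
    have hlogneg : Real.log p < 0 := Real.log_neg hp0 hlt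
    have hkl : klPMF (PMF.pure x) P = ENNReal.ofReal (-Real.log p) :=
      klPMF_pure_left P x hx
    have hpos : 0 < klPMF (PMF.pure x) P := by
      rw [hkl]; exact ENNReal.ofReal_pos.mpr (by linarith)
    have hfin : klPMF (PMF.pure x) P < ⊤ := by rw [hkl]; exact ENNReal.ofReal_lt_top
    have := hSDPI (PMF.pure x) P hpos hfin
    rw [PMF.pure_bind, hC x hx, hkl, ← ENNReal.ofReal_mul hη0.le] at this
    have hC' : C ≤ η * (-Real.log p) :=
      (ENNReal.ofReal_le_ofReal_iff (by nlinarith)).mp this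
    have : C / η ≤ -Real.log p := by
      rw [div_le_iff₀ hη0] at *; linarith [hC']
    calc p = Real.exp (Real.log p) := (Real.exp_log hp0).symm
      _ ≤ Real.exp (-(C / η)) := Real.exp_le_exp.mpr (by linarith)
  · -- p = 1, P = pure x
    have hPx1 : P x = 1 :=
      (ENNReal.toReal_eq_one_iff (P x)).mp (by rw [← hp]; exact heq)
    have hsupp : P.support = {x} := (P.apply_eq_one_iff x).mp hPx1
    have hPeq : P = PMF.pure x := by
      ext a
      rw [PMF.pure_apply]
      by_cases h : a = x
      · subst h; simp [hPx1]
      · simp only [h, if_false]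
        by_contra hne
        have : a ∈ P.support := PMF.mem_support_iff P a |>.mpr hne
        rw [hsupp] at this
        exact h this
    have h0 : ENNReal.ofReal C = 0 := by
      rw [← hC x hx, hPeq, PMF.pure_bind, klPMF_self]
    have hCle : C ≤ 0 := ENNReal.ofReal_eq_zero.mp h0
    have : (1:ℝ) ≤ Real.exp (-(C / η)) := by
      rw [← Real.exp_zero]
      exact Real.exp_le_exp.mpr (by nlinarith [div_nonpos_of_nonpos_of_nonneg hCle hη0.le])
    linarith [heq ▸ this]
end

section
/- Let A ≥ 0 and let μ, ν be probability measures on [0, A]. Define the induced output pmfs on ℕ by μ_Y(k) = ∫ x^k e^{−x}/k! dμ(x) and ν_Y(k) = ∫ x^k e^{−x}/k! dν(x). Then KL(μ_Y ‖ ν_Y) ≤ (1 − e^{−A}) · KL(μ ‖ ν), i.e., the KL contraction coefficient of the amplitude-constrained Poisson channel is at most 1 − e^{−A}. -/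
open Real MeasureTheory ENNReal
open scoped Classical


/-- Kullback–Leibler divergence between two measures (natural log), valued in `ℝ≥0∞`:
`+∞` when absolute continuity fails or the defining integral does not converge. -/
noncomputable def klDiv' {α : Type*} [MeasurableSpace α] (μ ν : Measure α) : ℝ≥0∞ :=
  if μ ≪ ν ∧ Integrable (fun a => Real.log (μ.rnDeriv ν a).toReal) μ
  then ENNReal.ofReal (∫ a, Real.log (μ.rnDeriv ν a).toReal ∂μ)
  else ⊤

/-- The output measure on `ℕ` induced by an input measure `μ` on `ℝ` through the
Poisson channel: `μ_Y(k) = ∫ x^k e^{-x}/k! dμ(x)`. -/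
noncomputable def outMeasure (μ : Measure ℝ) : Measure ℕ :=
  Measure.count.withDensity
    (fun k => ENNReal.ofReal (∫ x, x ^ k * Real.exp (-x) / (Nat.factorial k) ∂μ))

namespace PoissonSDPI


/-- clamp to `[0, A]` -/
noncomputable def pj (A x : ℝ) : ℝ := max 0 (min x A)

lemma pj_nonneg (A x : ℝ) : 0 ≤ pj A x := le_max_left _ _

lemma pj_le {A : ℝ} (hA : 0 ≤ A) (x : ℝ) : pj A x ≤ A :=
  max_le hA (min_le_right _ _)

lemma pj_eq {A x : ℝ} (hx : x ∈ Set.Icc 0 A) : pj A x = x := by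
  rcases hx with ⟨h1, h2⟩
  rw [pj, min_eq_left h2, max_eq_right h1]

/-- clamped Poisson kernel -/
noncomputable def q (A : ℝ) (k : ℕ) (x : ℝ) : ℝ :=
  pj A x ^ k * Real.exp (-(pj A x)) / (Nat.factorial k)

lemma q_nonneg (A : ℝ) (k : ℕ) (x : ℝ) : 0 ≤ q A k x := by
  apply div_nonneg _ (by positivity)
  exact mul_nonneg (pow_nonneg (pj_nonneg A x) k) (Real.exp_pos _).le

lemma q_le {A : ℝ} (hA : 0 ≤ A) (k : ℕ) (x : ℝ) :
    q A k x ≤ A ^ k / (Nat.factorial k) := by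
  apply div_le_div_of_nonneg_right ?_ (by positivity) |>.trans_eq rfl
  · calc pj A x ^ k * Real.exp (-(pj A x)) ≤ A ^ k * 1 := by
          apply mul_le_mul (pow_le_pow_left₀ (pj_nonneg A x) (pj_le hA x) k)
            (Real.exp_le_one_iff.mpr (neg_nonpos.mpr (pj_nonneg A x)))
            (Real.exp_pos _).le (by positivity)
        _ = A ^ k := mul_one _

lemma continuous_q (A : ℝ) (k : ℕ) : Continuous (q A k) := by
  unfold q pj
  fun_prop

lemma q_zero (A x : ℝ) : q A 0 x = Real.exp (-(pj A x)) := by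
  simp [q]

lemma summable_q (A x : ℝ) : Summable (fun k => q A k x) := by
  have : (fun k => q A k x) = fun k => (pj A x ^ k / (Nat.factorial k)) * Real.exp (-(pj A x)) := by
    funext k; rw [q]; ring
  rw [this]
  exact (Real.summable_pow_div_factorial _).mul_right _

lemma tsum_q (A x : ℝ) : ∑' k, q A k x = 1 := by
  have h1 : (fun k => q A k x) = fun k => (pj A x ^ k / (Nat.factorial k)) * Real.exp (-(pj A x)) := by
    funext k; rw [q]; ring
  have h2 : ∑' k : ℕ, pj A x ^ k / (Nat.factorial k) = Real.exp (pj A x) := by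
    rw [Real.exp_eq_exp_ℝ, NormedSpace.exp_eq_tsum_div]
  rw [h1, tsum_mul_right, h2, ← Real.exp_add]
  simp

/-- residual kernel -/
noncomputable def r (A : ℝ) (k : ℕ) (x : ℝ) : ℝ :=
  q A k x - if k = 0 then Real.exp (-A) else 0

lemma r_nonneg {A : ℝ} (hA : 0 ≤ A) (k : ℕ) (x : ℝ) : 0 ≤ r A k x := by
  rcases eq_or_ne k 0 with rfl | hk
  · simp only [r, if_pos rfl, q_zero, sub_nonneg]
    exact Real.exp_le_exp.mpr (by simpa using pj_le hA x)
  · simp only [r, if_neg hk, sub_zero]; exact q_nonneg A k x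

lemma r_le_q (A : ℝ) (k : ℕ) (x : ℝ) : r A k x ≤ q A k x := by
  rw [r]
  split <;> simp [Real.exp_pos A, (Real.exp_pos (-A)).le]

lemma summable_r (A x : ℝ) : Summable (fun k => r A k x) :=
  (summable_q A x).sub ((hasSum_ite_eq 0 (Real.exp (-A))).summable)

lemma tsum_r (A x : ℝ) : ∑' k, r A k x = 1 - Real.exp (-A) := by
  rw [show (fun k => r A k x) = (fun k => q A k x - if k = 0 then Real.exp (-A) else 0) from rfl,
    Summable.tsum_sub (summable_q A x) ((hasSum_ite_eq 0 (Real.exp (-A))).summable),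
    tsum_q, (hasSum_ite_eq 0 (Real.exp (-A))).tsum_eq]

/-- scalar tangent-line inequality for `t log t` -/
lemma tangent {t m : ℝ} (ht : 0 ≤ t) (hm : 0 < m) :
    t * Real.log m + t - m ≤ t * Real.log t := by
  rcases ht.eq_or_lt with rfl | ht'
  · simpa using hm.le
  · have h := Real.log_le_sub_one_of_pos (div_pos hm ht')
    have h2 : Real.log m - Real.log t ≤ m / t - 1 := by
      rwa [Real.log_div hm.ne' ht'.ne'] at h
    have h3 := mul_le_mul_of_nonneg_left h2 ht'.le
    have h4 : t * (m / t - 1) = m - t := by field_simp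
    nlinarith [h3, h4]

lemma lb {a b : ℝ} (ha : 0 ≤ a) (hb : 0 < b) : a - b ≤ a * Real.log (a / b) := by
  rcases ha.eq_or_lt with rfl | ha'
  · simpa using hb.le
  · have h := tangent ha hb
    rw [Real.log_div ha'.ne' hb.ne']
    nlinarith [h]

section Coef

variable {A : ℝ} {μ ν : Measure ℝ}

lemma ae_Icc (hμ : μ (Set.Icc 0 A)ᶜ = 0) : ∀ᵐ x ∂μ, x ∈ Set.Icc 0 A := by
  exact mem_ae_iff.mpr hμ

lemma integrable_q (hA : 0 ≤ A) [IsFiniteMeasure μ] (k : ℕ) : Integrable (q A k) μ := by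
  refine (integrable_const (A ^ k / (Nat.factorial k))).mono'
    (continuous_q A k).aestronglyMeasurable (ae_of_all _ fun x => ?_)
  rw [Real.norm_of_nonneg (q_nonneg A k x)]
  exact q_le hA k x

lemma integrable_r (hA : 0 ≤ A) [IsFiniteMeasure μ] (k : ℕ) : Integrable (r A k) μ :=
  (integrable_q hA k).sub (integrable_const _)

/-- output coefficient -/
noncomputable def aC (A : ℝ) (μ : Measure ℝ) (k : ℕ) : ℝ := ∫ x, q A k x ∂μ

/-- residual coefficient -/
noncomputable def rC (A : ℝ) (μ : Measure ℝ) (k : ℕ) : ℝ := ∫ x, r A k x ∂μ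

lemma aC_nonneg (A : ℝ) (μ : Measure ℝ) (k : ℕ) : 0 ≤ aC A μ k :=
  integral_nonneg (q_nonneg A k)

lemma rC_nonneg (hA : 0 ≤ A) (μ : Measure ℝ) (k : ℕ) : 0 ≤ rC A μ k :=
  integral_nonneg (r_nonneg hA k)

lemma rC_eq (hA : 0 ≤ A) [IsProbabilityMeasure μ] (k : ℕ) :
    rC A μ k = aC A μ k - (if k = 0 then Real.exp (-A) else 0) := by
  rw [rC, show (fun x => r A k x) = fun x => q A k x - (if k = 0 then Real.exp (-A) else 0)
      from rfl,
    integral_sub (integrable_q hA k) (integrable_const _), integral_const]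
  simp [aC]

lemma rC_le_aC (hA : 0 ≤ A) [IsFiniteMeasure μ] (k : ℕ) : rC A μ k ≤ aC A μ k :=
  integral_mono (integrable_r hA k) (integrable_q hA k) (fun x => r_le_q A k x)

lemma aC_hasSum (hA : 0 ≤ A) [IsProbabilityMeasure μ] : HasSum (aC A μ) 1 := by
  have hsummable : Summable (aC A μ) := by
    apply summable_of_sum_range_le (fun k => aC_nonneg A μ k)
    intro n
    have h1 : ∑ k ∈ Finset.range n, aC A μ k = ∫ x, ∑ k ∈ Finset.range n, q A k x ∂μ :=
      (integral_finset_sum _ fun k _ => integrable_q hA k).symm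
    rw [h1]
    calc ∫ x, ∑ k ∈ Finset.range n, q A k x ∂μ ≤ ∫ _, (1 : ℝ) ∂μ := by
          apply integral_mono (integrable_finset_sum _ fun k _ => integrable_q hA k)
            (integrable_const _)
          intro x
          calc ∑ k ∈ Finset.range n, q A k x ≤ ∑' k, q A k x :=
                Summable.sum_le_tsum _ (fun k _ => q_nonneg A k x) (summable_q A x)
            _ = 1 := tsum_q A x
      _ = 1 := by simp
  have htsum : ∑' k, aC A μ k = 1 := by
    have h2 : ∑' k, aC A μ k = ∫ x, ∑' k, q A k x ∂μ := by
      refine (integral_tsum (fun k => (continuous_q A k).aestronglyMeasurable) ?_).symm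
      have h3 : ∀ k, ∫⁻ x, ‖q A k x‖ₑ ∂μ = ∫⁻ x, ENNReal.ofReal (q A k x) ∂μ :=
        fun k => lintegral_congr fun x => by rw [Real.enorm_eq_ofReal (q_nonneg A k x)]
      rw [tsum_congr h3,
        ← lintegral_tsum (fun k => (continuous_q A k).measurable.ennreal_ofReal.aemeasurable)]
      have h4 : ∀ x, ∑' k, ENNReal.ofReal (q A k x) = 1 := by
        intro x
        rw [← ENNReal.ofReal_tsum_of_nonneg (fun k => q_nonneg A k x) (summable_q A x), tsum_q]
        simp
      simp only [h4]
      simp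
    rw [h2]
    have : ∀ x, ∑' k, q A k x = 1 := tsum_q A
    simp only [this]
    simp
  exact htsum ▸ hsummable.hasSum

lemma rC_hasSum (hA : 0 ≤ A) [IsProbabilityMeasure μ] :
    HasSum (rC A μ) (1 - Real.exp (-A)) := by
  have h : HasSum (fun k => aC A μ k - (if k = 0 then Real.exp (-A) else 0))
      (1 - Real.exp (-A)) := (aC_hasSum hA).sub (hasSum_ite_eq 0 _)
  exact h.congr_fun fun k => rC_eq hA k

lemma vanish (hA : 0 ≤ A) [IsProbabilityMeasure μ] [IsProbabilityMeasure ν]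
    (hac : μ ≪ ν) {k : ℕ} (hb : aC A ν k = 0) : aC A μ k = 0 := by
  have h0 : q A k =ᵐ[ν] 0 :=
    (integral_eq_zero_iff_of_nonneg (q_nonneg A k) (integrable_q hA k)).mp hb
  have h1 : q A k =ᵐ[μ] 0 := h0.filter_mono hac.ae_le
  rw [aC, integral_congr_ae h1]
  simp

end Coef

section Out

variable {A : ℝ} {μ ν : Measure ℝ}

lemma outMeasure_eq (hA : 0 ≤ A) (hμ : μ (Set.Icc 0 A)ᶜ = 0) :
    outMeasure μ = Measure.count.withDensity (fun k => ENNReal.ofReal (aC A μ k)) := by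
  unfold outMeasure
  congr 1
  funext k
  congr 1
  refine integral_congr_ae ?_
  filter_upwards [ae_Icc hμ] with x hx
  rw [q, pj_eq hx]

lemma outMeasure_singleton (hA : 0 ≤ A) (hμ : μ (Set.Icc 0 A)ᶜ = 0) (k : ℕ) :
    outMeasure μ {k} = ENNReal.ofReal (aC A μ k) := by
  rw [outMeasure_eq hA hμ, withDensity_apply _ (measurableSet_singleton k),
    lintegral_singleton, Measure.count_singleton, mul_one]

lemma isProbability_out (hA : 0 ≤ A) [IsProbabilityMeasure μ] (hμ : μ (Set.Icc 0 A)ᶜ = 0) :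
    IsProbabilityMeasure (outMeasure μ) := by
  constructor
  rw [outMeasure_eq hA hμ, withDensity_apply _ MeasurableSet.univ, Measure.restrict_univ,
    lintegral_count,
    ← ENNReal.ofReal_tsum_of_nonneg (aC_nonneg A μ) (aC_hasSum (μ := μ) hA).summable,
    (aC_hasSum (μ := μ) hA).tsum_eq]
  simp

end Out

section Key

variable {A : ℝ} {μ ν : Measure ℝ}

lemma continuous_r (A : ℝ) (k : ℕ) : Continuous (r A k) :=
  (continuous_q A k).sub continuous_const

lemma r_bound {A : ℝ} (hA : 0 ≤ A) (k : ℕ) (x : ℝ) :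
    ‖r A k x‖ ≤ A ^ k / (Nat.factorial k) := by
  rw [Real.norm_of_nonneg (r_nonneg hA k x)]
  exact (r_le_q A k x).trans (q_le hA k x)

lemma integrable_r_mul (hA : 0 ≤ A) [IsProbabilityMeasure μ] (k : ℕ) {g : ℝ → ℝ}
    (hg : Integrable g μ) : Integrable (fun x => r A k x * g x) μ :=
  hg.bdd_mul (continuous_r A k).aestronglyMeasurable (ae_of_all _ (r_bound hA k))

lemma key_ineq (hA : 0 ≤ A) [IsProbabilityMeasure μ] [IsProbabilityMeasure ν]
    (hac : μ ≪ ν) (hint : Integrable (fun x => Real.log (μ.rnDeriv ν x).toReal) μ) (k : ℕ) :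
    aC A μ k * Real.log (aC A μ k / aC A ν k)
      ≤ ∫ x, r A k x * Real.log ((μ.rnDeriv ν x).toReal) ∂μ := by
  by_cases ha : aC A μ k = 0
  · have hrc : rC A μ k = 0 :=
      le_antisymm (ha ▸ rC_le_aC hA k) (rC_nonneg hA μ k)
    have h0 : r A k =ᵐ[μ] 0 :=
      (integral_eq_zero_iff_of_nonneg (r_nonneg hA k) (integrable_r hA k)).mp hrc
    have h1 : (fun x => r A k x * Real.log ((μ.rnDeriv ν x).toReal)) =ᵐ[μ] 0 := by
      filter_upwards [h0] with x hx
      simp only [Pi.zero_apply] at hx ⊢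
      rw [hx, zero_mul]
    rw [ha, integral_congr_ae h1]
    simp
  · have ha' : 0 < aC A μ k := (aC_nonneg A μ k).lt_of_ne (Ne.symm ha)
    have hb' : 0 < aC A ν k := by
      rcases (aC_nonneg A ν k).eq_or_lt with h | h
      · exact absurd (vanish hA hac h.symm) ha
      · exact h
    set m := aC A μ k / aC A ν k with hm
    have hm' : 0 < m := div_pos ha' hb'
    -- pointwise tangent inequality
    have hpt : ∀ x, Real.log m * ((μ.rnDeriv ν x).toReal * r A k x)
        + (μ.rnDeriv ν x).toReal * r A k x - m * r A k x
        ≤ (μ.rnDeriv ν x).toReal • (r A k x * Real.log ((μ.rnDeriv ν x).toReal)) := by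
      intro x
      set t := (μ.rnDeriv ν x).toReal with ht
      have h1 := tangent (ENNReal.toReal_nonneg (a := μ.rnDeriv ν x)) hm'
      have h2 := mul_le_mul_of_nonneg_left h1 (r_nonneg hA k x)
      have e1 : Real.log m * (t * r A k x) + t * r A k x - m * r A k x
          = r A k x * (t * Real.log m + t - m) := by ring
      have e2 : t • (r A k x * Real.log t) = r A k x * (t * Real.log t) := by
        rw [smul_eq_mul]; ring
      rw [e1, e2]
      exact h2
    -- integrability
    have hIr_ν : Integrable (r A k) ν := integrable_r hA k
    have hIfr : Integrable (fun x => (μ.rnDeriv ν x).toReal * r A k x) ν := by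
      have h := (MeasureTheory.integrable_rnDeriv_smul_iff hac (f := r A k)).mpr (integrable_r hA k)
      simpa [smul_eq_mul] using h
    have hIrL : Integrable (fun x => r A k x * Real.log ((μ.rnDeriv ν x).toReal)) μ :=
      integrable_r_mul hA k hint
    have hIfrL : Integrable
        (fun x => (μ.rnDeriv ν x).toReal • (r A k x * Real.log ((μ.rnDeriv ν x).toReal))) ν :=
      (MeasureTheory.integrable_rnDeriv_smul_iff hac).mpr hIrL
    have hLHSint : Integrable (fun x => Real.log m * ((μ.rnDeriv ν x).toReal * r A k x)
        + (μ.rnDeriv ν x).toReal * r A k x - m * r A k x) ν :=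
      ((hIfr.const_mul _).add hIfr).sub (hIr_ν.const_mul m)
    have hmono := integral_mono hLHSint hIfrL hpt
    -- values
    have hRHS : ∫ x, (μ.rnDeriv ν x).toReal • (r A k x * Real.log ((μ.rnDeriv ν x).toReal)) ∂ν
        = ∫ x, r A k x * Real.log ((μ.rnDeriv ν x).toReal) ∂μ :=
      MeasureTheory.integral_rnDeriv_smul hac
    have hfr_val : ∫ x, (μ.rnDeriv ν x).toReal * r A k x ∂ν = rC A μ k := by
      have h := MeasureTheory.integral_rnDeriv_smul hac (f := r A k)
      simpa [smul_eq_mul, rC] using h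
    have hadd : Integrable (fun x => Real.log m * ((μ.rnDeriv ν x).toReal * r A k x)
        + (μ.rnDeriv ν x).toReal * r A k x) ν := (hIfr.const_mul _).add hIfr
    have hmul1 : Integrable (fun x => Real.log m * ((μ.rnDeriv ν x).toReal * r A k x)) ν :=
      hIfr.const_mul _
    have hmul2 : Integrable (fun x => m * r A k x) ν := hIr_ν.const_mul m
    have hLHS : ∫ x, (Real.log m * ((μ.rnDeriv ν x).toReal * r A k x)
        + (μ.rnDeriv ν x).toReal * r A k x - m * r A k x) ∂ν
        = Real.log m * rC A μ k + rC A μ k - m * rC A ν k := by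
      rw [integral_sub hadd hmul2, integral_add hmul1 hIfr, integral_const_mul, integral_const_mul,
        hfr_val]
      rfl
    -- algebra
    have halg : aC A μ k * Real.log m ≤ Real.log m * rC A μ k + rC A μ k - m * rC A ν k := by
      rw [rC_eq (μ := μ) hA k, rC_eq (μ := ν) hA k]
      set e := (if k = 0 then Real.exp (-A) else 0) with he
      have he0 : 0 ≤ e := by
        rw [he]; split
        · exact (Real.exp_pos _).le
        · exact le_refl 0
      have hlog : Real.log m ≤ m - 1 := Real.log_le_sub_one_of_pos hm'
      have hmb : m * aC A ν k = aC A μ k := by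
        rw [hm]; exact div_mul_cancel₀ _ hb'.ne'
      have hkey2 : Real.log m * (aC A μ k - e) + (aC A μ k - e) - m * (aC A ν k - e)
          = aC A μ k * Real.log m + e * (m - 1 - Real.log m)
            + (aC A μ k - m * aC A ν k) := by ring
      have hnn : 0 ≤ e * (m - 1 - Real.log m) :=
        mul_nonneg he0 (by linarith : (0:ℝ) ≤ m - 1 - Real.log m)
      rw [hkey2, hmb]
      linarith
    calc aC A μ k * Real.log m
        ≤ Real.log m * rC A μ k + rC A μ k - m * rC A ν k := halg
      _ = ∫ x, (Real.log m * ((μ.rnDeriv ν x).toReal * r A k x)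
            + (μ.rnDeriv ν x).toReal * r A k x - m * r A k x) ∂ν := hLHS.symm
      _ ≤ ∫ x, (μ.rnDeriv ν x).toReal • (r A k x * Real.log ((μ.rnDeriv ν x).toReal)) ∂ν := hmono
      _ = ∫ x, r A k x * Real.log ((μ.rnDeriv ν x).toReal) ∂μ := hRHS
end Key

section Sum

variable {A : ℝ} {μ ν : Measure ℝ}

lemma G_norm_summable (hA : 0 ≤ A) [IsProbabilityMeasure μ] [IsProbabilityMeasure ν]
    (hint : Integrable (fun x => Real.log (μ.rnDeriv ν x).toReal) μ) :
    Summable (fun k => ∫ x, r A k x * |Real.log ((μ.rnDeriv ν x).toReal)| ∂μ) := by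
  apply summable_of_sum_range_le
    (c := ∫ x, (1 - Real.exp (-A)) * |Real.log ((μ.rnDeriv ν x).toReal)| ∂μ)
    (fun k => integral_nonneg fun x => mul_nonneg (r_nonneg hA k x) (abs_nonneg _))
  intro n
  rw [← integral_finset_sum _ (fun k _ => integrable_r_mul hA k hint.abs)]
  apply integral_mono (integrable_finset_sum _ fun k _ => integrable_r_mul hA k hint.abs)
    (hint.abs.const_mul _)
  intro x
  simp only
  rw [← Finset.sum_mul]
  apply mul_le_mul_of_nonneg_right _ (abs_nonneg _)
  calc ∑ k ∈ Finset.range n, r A k x ≤ ∑' k, r A k x :=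
        Summable.sum_le_tsum _ (fun k _ => r_nonneg hA k x) (summable_r A x)
    _ = 1 - Real.exp (-A) := tsum_r A x

lemma G_summable (hA : 0 ≤ A) [IsProbabilityMeasure μ] [IsProbabilityMeasure ν]
    (hint : Integrable (fun x => Real.log (μ.rnDeriv ν x).toReal) μ) :
    Summable (fun k => ∫ x, r A k x * Real.log ((μ.rnDeriv ν x).toReal) ∂μ) := by
  apply Summable.of_norm_bounded (G_norm_summable hA hint)
  intro k
  calc ‖∫ x, r A k x * Real.log ((μ.rnDeriv ν x).toReal) ∂μ‖
      ≤ ∫ x, ‖r A k x * Real.log ((μ.rnDeriv ν x).toReal)‖ ∂μ := norm_integral_le_integral_norm _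
    _ = ∫ x, r A k x * |Real.log ((μ.rnDeriv ν x).toReal)| ∂μ := by
        refine integral_congr_ae (ae_of_all _ fun x => ?_)
        simp only
        rw [norm_mul, Real.norm_of_nonneg (r_nonneg hA k x), Real.norm_eq_abs]

lemma G_tsum (hA : 0 ≤ A) [IsProbabilityMeasure μ] [IsProbabilityMeasure ν]
    (hint : Integrable (fun x => Real.log (μ.rnDeriv ν x).toReal) μ) :
    ∑' k, ∫ x, r A k x * Real.log ((μ.rnDeriv ν x).toReal) ∂μ
      = (1 - Real.exp (-A)) * ∫ x, Real.log ((μ.rnDeriv ν x).toReal) ∂μ := by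
  have hmeasL : Measurable (fun x => Real.log ((μ.rnDeriv ν x).toReal)) :=
    (Measure.measurable_rnDeriv μ ν).ennreal_toReal.log
  have h1 : ∀ k : ℕ,
      AEStronglyMeasurable (fun x => r A k x * Real.log ((μ.rnDeriv ν x).toReal)) μ :=
    fun k => ((continuous_r A k).measurable.mul hmeasL).aestronglyMeasurable
  have h2 : ∑' k, ∫⁻ x, ‖r A k x * Real.log ((μ.rnDeriv ν x).toReal)‖ₑ ∂μ ≠ ⊤ := by
    have hper : ∀ (k : ℕ) (x : ℝ), ‖r A k x * Real.log ((μ.rnDeriv ν x).toReal)‖ₑ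
        = ENNReal.ofReal (r A k x) * ‖Real.log ((μ.rnDeriv ν x).toReal)‖ₑ := by
      intro k x
      rw [enorm_mul, Real.enorm_eq_ofReal (r_nonneg hA k x)]
    calc ∑' k, ∫⁻ x, ‖r A k x * Real.log ((μ.rnDeriv ν x).toReal)‖ₑ ∂μ
        = ∑' k, ∫⁻ x, ENNReal.ofReal (r A k x) * ‖Real.log ((μ.rnDeriv ν x).toReal)‖ₑ ∂μ :=
          tsum_congr fun k => lintegral_congr fun x => hper k x
      _ = ∫⁻ x, ∑' k, ENNReal.ofReal (r A k x) * ‖Real.log ((μ.rnDeriv ν x).toReal)‖ₑ ∂μ :=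
          (lintegral_tsum fun k => ((continuous_r A k).measurable.ennreal_ofReal.mul
            hmeasL.enorm).aemeasurable).symm
      _ = ∫⁻ x, ENNReal.ofReal (1 - Real.exp (-A)) * ‖Real.log ((μ.rnDeriv ν x).toReal)‖ₑ ∂μ := by
          refine lintegral_congr fun x => ?_
          rw [ENNReal.tsum_mul_right,
            ← ENNReal.ofReal_tsum_of_nonneg (fun k => r_nonneg hA k x) (summable_r A x),
            tsum_r]
      _ = ENNReal.ofReal (1 - Real.exp (-A)) * ∫⁻ x, ‖Real.log ((μ.rnDeriv ν x).toReal)‖ₑ ∂μ :=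
          lintegral_const_mul _ hmeasL.enorm
      _ ≠ ⊤ := ENNReal.mul_ne_top ENNReal.ofReal_ne_top hint.2.ne
  rw [← integral_tsum h1 h2]
  calc ∫ x, ∑' k, r A k x * Real.log ((μ.rnDeriv ν x).toReal) ∂μ
      = ∫ x, (1 - Real.exp (-A)) * Real.log ((μ.rnDeriv ν x).toReal) ∂μ := by
        refine integral_congr_ae (ae_of_all _ fun x => ?_)
        simp only
        rw [tsum_mul_right, tsum_r]
    _ = (1 - Real.exp (-A)) * ∫ x, Real.log ((μ.rnDeriv ν x).toReal) ∂μ := integral_const_mul _ _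

end Sum

section MainSec

variable {A : ℝ} {μ ν : Measure ℝ}

lemma T_nonneg (hA : 0 ≤ A) [IsProbabilityMeasure μ] [IsProbabilityMeasure ν]
    (hac : μ ≪ ν) (k : ℕ) :
    0 ≤ aC A μ k * Real.log (aC A μ k / aC A ν k) + aC A ν k - aC A μ k := by
  by_cases hb : aC A ν k = 0
  · have ha := vanish hA hac hb
    simp [ha, hb]
  · have hb' : 0 < aC A ν k := (aC_nonneg A ν k).lt_of_ne (Ne.symm hb)
    have := lb (aC_nonneg A μ k) hb'
    linarith

lemma S_facts (hA : 0 ≤ A) [IsProbabilityMeasure μ] [IsProbabilityMeasure ν]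
    (hac : μ ≪ ν) (hint : Integrable (fun x => Real.log (μ.rnDeriv ν x).toReal) μ) :
    Summable (fun k => aC A μ k * Real.log (aC A μ k / aC A ν k) + aC A ν k - aC A μ k) ∧
    ∑' k, aC A μ k * Real.log (aC A μ k / aC A ν k)
      ≤ (1 - Real.exp (-A)) * ∫ x, Real.log ((μ.rnDeriv ν x).toReal) ∂μ := by
  set S := fun k => aC A μ k * Real.log (aC A μ k / aC A ν k) with hS
  have hsa : Summable (aC A μ) := (aC_hasSum (μ := μ) hA).summable
  have hsb : Summable (aC A ν) := (aC_hasSum (μ := ν) hA).summable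
  have hta : ∑' k, aC A μ k = 1 := (aC_hasSum (μ := μ) hA).tsum_eq
  have htb : ∑' k, aC A ν k = 1 := (aC_hasSum (μ := ν) hA).tsum_eq
  have hGs : Summable (fun k => ∫ x, r A k x * Real.log ((μ.rnDeriv ν x).toReal) ∂μ) :=
    G_summable hA hint
  have hkey : ∀ k, S k ≤ ∫ x, r A k x * Real.log ((μ.rnDeriv ν x).toReal) ∂μ :=
    fun k => key_ineq hA hac hint k
  have hT0 : ∀ k, 0 ≤ S k + aC A ν k - aC A μ k := fun k => T_nonneg hA hac k
  have hUs : Summable (fun k =>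
      (∫ x, r A k x * Real.log ((μ.rnDeriv ν x).toReal) ∂μ) + aC A ν k - aC A μ k) :=
    (hGs.add hsb).sub hsa
  have hTle : ∀ k, S k + aC A ν k - aC A μ k
      ≤ (∫ x, r A k x * Real.log ((μ.rnDeriv ν x).toReal) ∂μ) + aC A ν k - aC A μ k :=
    fun k => by linarith [hkey k]
  have hTs : Summable (fun k => S k + aC A ν k - aC A μ k) :=
    hUs.of_nonneg_of_le hT0 hTle
  refine ⟨hTs, ?_⟩
  have hSs : Summable S := ((hTs.sub hsb).add hsa).congr (fun k => by ring)
  have h1 : ∑' k, (S k + aC A ν k - aC A μ k)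
      ≤ ∑' k, ((∫ x, r A k x * Real.log ((μ.rnDeriv ν x).toReal) ∂μ) + aC A ν k - aC A μ k) :=
    Summable.tsum_le_tsum hTle hTs hUs
  have h2 : ∑' k, (S k + aC A ν k - aC A μ k) = ∑' k, S k + 1 - 1 := by
    rw [Summable.tsum_sub (hSs.add hsb) hsa, Summable.tsum_add hSs hsb, hta, htb]
  have h3 : ∑' k, ((∫ x, r A k x * Real.log ((μ.rnDeriv ν x).toReal) ∂μ) + aC A ν k - aC A μ k)
      = ∑' k, (∫ x, r A k x * Real.log ((μ.rnDeriv ν x).toReal) ∂μ) + 1 - 1 := by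
    rw [Summable.tsum_sub (hGs.add hsb) hsa, Summable.tsum_add hGs hsb, hta, htb]
  have h4 := G_tsum (μ := μ) (ν := ν) hA hint
  linarith [h1, h2, h3, h4]

lemma main (hA : 0 < A) [IsProbabilityMeasure μ] [IsProbabilityMeasure ν]
    (hμ : μ (Set.Icc 0 A)ᶜ = 0) (hν : ν (Set.Icc 0 A)ᶜ = 0)
    (hac : μ ≪ ν) (hint : Integrable (fun x => Real.log (μ.rnDeriv ν x).toReal) μ) :
    klDiv' (outMeasure μ) (outMeasure ν)
      ≤ ENNReal.ofReal ((1 - Real.exp (-A)) * ∫ x, Real.log ((μ.rnDeriv ν x).toReal) ∂μ) := by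
  have hA0 : (0:ℝ) ≤ A := hA.le
  have hPμ : IsProbabilityMeasure (outMeasure μ) := isProbability_out hA0 hμ
  have hPν : IsProbabilityMeasure (outMeasure ν) := isProbability_out hA0 hν
  obtain ⟨hTs, hSle⟩ := S_facts hA0 hac hint
  have hsa : Summable (aC A μ) := (aC_hasSum (μ := μ) hA0).summable
  have hsb : Summable (aC A ν) := (aC_hasSum (μ := ν) hA0).summable
  set h : ℕ → ℝ≥0∞ := fun k => ENNReal.ofReal (aC A μ k) / ENNReal.ofReal (aC A ν k) with hh
  have hwd : outMeasure μ = (outMeasure ν).withDensity h := by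
    rw [outMeasure_eq hA0 hμ, outMeasure_eq hA0 hν,
      ← withDensity_mul _ (Measurable.of_discrete) (Measurable.of_discrete)]
    congr 1
    funext k
    simp only [Pi.mul_apply, hh]
    by_cases hb : aC A ν k = 0
    · have ha := vanish hA0 hac hb
      simp [ha, hb]
    · exact (ENNReal.mul_div_cancel
        ((ENNReal.ofReal_pos.mpr ((aC_nonneg A ν k).lt_of_ne (Ne.symm hb))).ne')
        ENNReal.ofReal_ne_top).symm
  have hacY : outMeasure μ ≪ outMeasure ν := by
    rw [hwd]; exact withDensity_absolutelyContinuous _ _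
  have hrn : (outMeasure μ).rnDeriv (outMeasure ν) =ᵐ[outMeasure ν] h := by
    rw [hwd]; exact Measure.rnDeriv_withDensity _ Measurable.of_discrete
  have hrnμ : (outMeasure μ).rnDeriv (outMeasure ν) =ᵐ[outMeasure μ] h :=
    hrn.filter_mono hacY.ae_le
  have hSfun : ∀ k : ℕ, (ENNReal.ofReal (aC A μ k)).toReal * Real.log ((h k).toReal)
      = aC A μ k * Real.log (aC A μ k / aC A ν k) := by
    intro k
    rw [ENNReal.toReal_ofReal (aC_nonneg A μ k)]
    by_cases ha : aC A μ k = 0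
    · rw [ha, zero_mul, zero_mul]
    · have hb : aC A ν k ≠ 0 := fun hb0 => ha (vanish hA0 hac hb0)
      rw [hh]
      simp only
      rw [ENNReal.toReal_div, ENNReal.toReal_ofReal (aC_nonneg A μ k),
        ENNReal.toReal_ofReal (aC_nonneg A ν k)]
  have hψint : Integrable (fun k => Real.log ((h k).toReal)) (outMeasure μ) := by
    rw [outMeasure_eq hA0 hμ,
      integrable_withDensity_iff_integrable_smul' Measurable.of_discrete
        (ae_of_all _ fun k => ENNReal.ofReal_lt_top)]
    rw [integrable_count_iff]
    have hbd : ∀ k : ℕ, ‖(ENNReal.ofReal (aC A μ k)).toReal • Real.log ((h k).toReal)‖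
        ≤ (aC A μ k * Real.log (aC A μ k / aC A ν k) + aC A ν k - aC A μ k)
          + aC A ν k + aC A μ k := by
      intro k
      rw [smul_eq_mul, hSfun k, Real.norm_eq_abs]
      have h1 := T_nonneg (ν := ν) hA0 hac k
      have h2 := aC_nonneg A μ k
      have h3 := aC_nonneg A ν k
      rcases abs_cases (aC A μ k * Real.log (aC A μ k / aC A ν k)) with ⟨he, _⟩ | ⟨he, _⟩ <;>
        linarith
    exact Summable.of_nonneg_of_le (fun k => norm_nonneg _) hbd ((hTs.add hsb).add hsa)
  have hintY : Integrable
      (fun k => Real.log (((outMeasure μ).rnDeriv (outMeasure ν) k).toReal)) (outMeasure μ) := by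
    refine hψint.congr ?_
    filter_upwards [hrnμ] with k hk
    rw [hk]
  rw [klDiv', if_pos ⟨hacY, hintY⟩]
  have hval : ∫ k, Real.log (((outMeasure μ).rnDeriv (outMeasure ν) k).toReal) ∂(outMeasure μ)
      = ∑' k, aC A μ k * Real.log (aC A μ k / aC A ν k) := by
    have hcongr : (fun k => Real.log (((outMeasure μ).rnDeriv (outMeasure ν) k).toReal))
        =ᵐ[outMeasure μ] fun k => Real.log ((h k).toReal) := by
      filter_upwards [hrnμ] with k hk
      rw [hk]
    rw [integral_congr_ae hcongr, integral_countable' hψint]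
    refine tsum_congr fun k => ?_
    rw [measureReal_def, outMeasure_singleton hA0 hμ k, smul_eq_mul, hSfun k]
  rw [hval]
  exact ENNReal.ofReal_le_ofReal hSle

end MainSec

end PoissonSDPI

/-- The KL contraction coefficient of the amplitude-constrained Poisson channel is at most
`1 - e^{-A}`: for probability measures `μ, ν` supported on `[0, A]`,
`KL(μ_Y ‖ ν_Y) ≤ (1 - e^{-A}) · KL(μ ‖ ν)`. -/
theorem poisson_contraction_coefficient
    (A : ℝ) (hA : 0 ≤ A) (μ ν : Measure ℝ)
    [IsProbabilityMeasure μ] [IsProbabilityMeasure ν]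
    (hμ : μ (Set.Icc 0 A)ᶜ = 0) (hν : ν (Set.Icc 0 A)ᶜ = 0) :
    klDiv' (outMeasure μ) (outMeasure ν) ≤ ENNReal.ofReal (1 - Real.exp (-A)) * klDiv' μ ν := by
  rcases hA.eq_or_lt with h0 | hA'
  · -- A = 0 : both measures are the point mass at 0, so both sides vanish
    subst h0
    have key : ∀ (m : Measure ℝ) [IsProbabilityMeasure m], m (Set.Icc (0:ℝ) 0)ᶜ = 0 →
        ∀ s : Set ℝ, MeasurableSet s → m s = if (0:ℝ) ∈ s then 1 else 0 := by
      intro m _ hm s _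
      rw [Set.Icc_self] at hm
      have h1 : m {(0:ℝ)} = 1 := (prob_compl_eq_zero_iff (measurableSet_singleton 0)).mp hm
      have h2 := measure_inter_add_diff (μ := m) s (measurableSet_singleton (0:ℝ))
      have h3 : m (s \ {0}) = 0 := measure_mono_null (fun x hx => hx.2) hm
      by_cases h4 : (0:ℝ) ∈ s
      · have h5 : s ∩ {0} = {0} :=
          Set.inter_eq_self_of_subset_right (Set.singleton_subset_iff.mpr h4)
      -- m s = 1
        rw [if_pos h4, ← h2, h5, h1, h3, add_zero]
      · have h5 : s ∩ {0} = ∅ := Set.inter_singleton_eq_empty.mpr h4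
        rw [if_neg h4, ← h2, h5, h3]
        simp
    have hμν : μ = ν := Measure.ext fun s hs => by rw [key μ hμ s hs, key ν hν s hs]
    subst hμν
    have hP : IsProbabilityMeasure (outMeasure μ) := PoissonSDPI.isProbability_out le_rfl hμ
    have hrs := Measure.rnDeriv_self (outMeasure μ)
    have h0' : (fun k => Real.log (((outMeasure μ).rnDeriv (outMeasure μ) k).toReal))
        =ᵐ[outMeasure μ] fun _ => (0:ℝ) := by
      filter_upwards [hrs] with k hk
      rw [hk]
      simp
    rw [klDiv', if_pos ⟨Measure.AbsolutelyContinuous.refl _,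
      (integrable_const (0:ℝ)).congr h0'.symm⟩, integral_congr_ae h0']
    simp
  · -- A > 0
    by_cases hKL : μ ≪ ν ∧ Integrable (fun a => Real.log ((μ.rnDeriv ν a).toReal)) μ
    · obtain ⟨hac, hint⟩ := hKL
      have hmain := PoissonSDPI.main hA' hμ hν hac hint
      have h2 : klDiv' μ ν
          = ENNReal.ofReal (∫ x, Real.log ((μ.rnDeriv ν x).toReal) ∂μ) := by
        rw [klDiv', if_pos ⟨hac, hint⟩]
      have hc0 : (0:ℝ) ≤ 1 - Real.exp (-A) := by
        have : Real.exp (-A) ≤ 1 := Real.exp_le_one_iff.mpr (by linarith)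
        linarith
      rw [h2, ← ENNReal.ofReal_mul hc0]
      exact hmain
    · have h2 : klDiv' μ ν = ⊤ := by rw [klDiv', if_neg hKL]
      have hc : ENNReal.ofReal (1 - Real.exp (-A)) ≠ 0 := by
        have hlt : Real.exp (-A) < 1 := by
          rw [← Real.exp_zero]
          exact Real.exp_lt_exp.mpr (by linarith)
        exact (ENNReal.ofReal_pos.mpr (by linarith)).ne'
      rw [h2, ENNReal.mul_top hc]
      exact le_top
end

section
/- Suppose 0 ∈ S, x ∈ S with x > 0, and C ∈ ℝ satisfies D(0) = C and D(x) = C. Then p(x) ≤ exp( −C − x·e^{−x}/(1 − e^{−x}) ). -/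
open Real

/-- Poisson channel pmf: `P_{Y|X}(y|x) = x^y e^{-x} / y!` (with `0^0 = 1`, `0! = 1`). -/
noncomputable def poissonPMF (x : ℝ) (y : ℕ) : ℝ := x ^ y * Real.exp (-x) / (Nat.factorial y)

/-- Output pmf induced by a finitely supported input: `P_Y(k) = Σ_{x ∈ S} p(x) x^k e^{-x}/k!`. -/
noncomputable def outPMF (S : Finset ℝ) (p : ℝ → ℝ) (k : ℕ) : ℝ :=
  ∑ x ∈ S, p x * poissonPMF x k

/-- Relative entropy `D(x) = Σ_k P_{Y|X}(k|x) log (P_{Y|X}(k|x) / P_Y(k))`. -/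
noncomputable def relEnt (S : Finset ℝ) (p : ℝ → ℝ) (x : ℝ) : ℝ :=
  ∑' k : ℕ, poissonPMF x k * Real.log (poissonPMF x k / outPMF S p k)

lemma hasSum_exp_series (x : ℝ) :
    HasSum (fun n : ℕ => x ^ n / (Nat.factorial n : ℝ)) (Real.exp x) := by
  rw [Real.exp_eq_exp_ℝ, NormedSpace.exp_eq_tsum_div]
  exact (Real.summable_pow_div_factorial x).hasSum

lemma summable_nat_mul_pow_div_factorial (x : ℝ) :
    Summable (fun k : ℕ => (k : ℝ) * x ^ k / (Nat.factorial k : ℝ)) := by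
  rw [← summable_nat_add_iff 1]
  have h : (fun k : ℕ => ((k + 1 : ℕ) : ℝ) * x ^ (k + 1) / (Nat.factorial (k + 1) : ℝ))
      = fun k : ℕ => x * (x ^ k / (Nat.factorial k : ℝ)) := by
    funext k
    rw [Nat.factorial_succ]
    push_cast
    have hk : ((k : ℝ) + 1) ≠ 0 := by positivity
    have hf : (Nat.factorial k : ℝ) ≠ 0 := by positivity
    field_simp
    ring
  rw [h]
  exact (Real.summable_pow_div_factorial x).mul_left x

lemma poissonPMF_pos {x : ℝ} (hx : 0 < x) (k : ℕ) : 0 < poissonPMF x k := by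
  unfold poissonPMF
  positivity

lemma poissonPMF_nonneg {x : ℝ} (hx : 0 ≤ x) (k : ℕ) : 0 ≤ poissonPMF x k := by
  unfold poissonPMF
  positivity

lemma hasSum_poissonPMF (x : ℝ) : HasSum (poissonPMF x) 1 := by
  have h := (hasSum_exp_series x).mul_right (Real.exp (-x))
  have h1 : Real.exp x * Real.exp (-x) = 1 := by rw [← Real.exp_add]; simp
  rw [h1] at h
  have heq : poissonPMF x = fun n : ℕ => x ^ n / (Nat.factorial n : ℝ) * Real.exp (-x) :=
    funext fun k => by unfold poissonPMF; ring
  rw [heq]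
  exact h

lemma summable_poissonPMF (x : ℝ) : Summable (poissonPMF x) :=
  (hasSum_poissonPMF x).summable

lemma summable_nat_mul_poissonPMF (x : ℝ) :
    Summable (fun k : ℕ => (k : ℝ) * poissonPMF x k) := by
  have h := (summable_nat_mul_pow_div_factorial x).mul_right (Real.exp (-x))
  refine h.congr fun k => ?_
  unfold poissonPMF
  ring

/-- Location-dependent bound: if `0 ∈ S`, `x ∈ S` with `x > 0`, and `D(0) = C = D(x)`, then
`p(x) ≤ exp (−C − x e^{-x}/(1 − e^{-x}))`. -/
theorem mass_location_dependent_bound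
    (A : ℝ) (hA : 0 < A) (S : Finset ℝ) (hS : (S : Set ℝ) ⊆ Set.Icc 0 A)
    (p : ℝ → ℝ) (hp : ∀ x ∈ S, 0 < p x) (hpsum : ∑ x ∈ S, p x = 1)
    (h0 : (0 : ℝ) ∈ S) (x : ℝ) (hx : x ∈ S) (hxpos : 0 < x)
    (C : ℝ) (hC0 : relEnt S p 0 = C) (hCx : relEnt S p x = C) :
    p x ≤ Real.exp (-C - x * Real.exp (-x) / (1 - Real.exp (-x))) := by
  have hxA : x ≤ A := (hS hx).2
  set q := p x with hqdef
  have hq : 0 < q := hp x hx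
  have hq1 : q ≤ 1 := by
    rw [← hpsum]
    exact Finset.single_le_sum (fun i hi => (hp i hi).le) hx
  have hlq : Real.log q ≤ 0 := Real.log_nonpos hq.le hq1
  set e := Real.exp (-x) with hedef
  have he : 0 < e := Real.exp_pos _
  have he1 : e < 1 := by
    rw [hedef]
    exact Real.exp_lt_one_iff.mpr (by linarith)
  have h1e : (0 : ℝ) < 1 - e := by linarith
  set f := poissonPMF x with hfdef
  have hfpos : ∀ k, 0 < f k := poissonPMF_pos hxpos
  set P := outPMF S p with hPdef
  have hterm_nonneg : ∀ k : ℕ, ∀ z ∈ S, 0 ≤ p z * poissonPMF z k := by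
    intro k z hz
    exact mul_nonneg (hp z hz).le (poissonPMF_nonneg (hS hz).1 k)
  have hPpos : ∀ k, 0 < P k := by
    intro k
    refine Finset.sum_pos' (hterm_nonneg k) ⟨x, hx, ?_⟩
    exact mul_pos hq (hfpos k)
  have hPle : ∀ k, q * f k ≤ P k := by
    intro k
    exact Finset.single_le_sum (fun z hz => hterm_nonneg k z hz) hx
  have hPub : ∀ k, P k ≤ A ^ k / (Nat.factorial k : ℝ) := by
    intro k
    have hb : ∀ z ∈ S, p z * poissonPMF z k ≤ p z * (A ^ k / (Nat.factorial k : ℝ)) := by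
      intro z hz
      refine mul_le_mul_of_nonneg_left ?_ (hp z hz).le
      unfold poissonPMF
      have hz0 := (hS hz).1
      have hzA := (hS hz).2
      have h1 : z ^ k ≤ A ^ k := pow_le_pow_left₀ hz0 hzA k
      have h2 : Real.exp (-z) ≤ 1 := Real.exp_le_one_iff.mpr (by linarith)
      have hfk : (0:ℝ) < (Nat.factorial k : ℝ) := by positivity
      have h3 : z ^ k * Real.exp (-z) ≤ A ^ k := by
        calc z ^ k * Real.exp (-z) ≤ A ^ k * 1 :=
              mul_le_mul h1 h2 (Real.exp_pos _).le (by positivity)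
          _ = A ^ k := mul_one _
      exact div_le_div_of_nonneg_right h3 hfk.le
    calc P k ≤ ∑ z ∈ S, p z * (A ^ k / (Nat.factorial k : ℝ)) := Finset.sum_le_sum hb
      _ = A ^ k / (Nat.factorial k : ℝ) := by rw [← Finset.sum_mul, hpsum, one_mul]
  -- Step A: P 0 = exp (-C)
  have hP0 : P 0 = Real.exp (-C) := by
    have h : relEnt S p 0 = -Real.log (P 0) := by
      unfold relEnt
      rw [tsum_eq_single 0]
      · have h00 : poissonPMF 0 0 = 1 := by unfold poissonPMF; simp
        rw [h00, one_mul, one_div, Real.log_inv]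
      · intro k hk
        have h0k : poissonPMF 0 k = 0 := by unfold poissonPMF; simp [zero_pow hk]
        rw [h0k, zero_mul]
    rw [h] at hC0
    rw [← Real.exp_log (hPpos 0), show Real.log (P 0) = -C by linarith]
  have hf0 : f 0 = e := by rw [hfdef, hedef]; unfold poissonPMF; simp
  -- log-ratio upper bound
  have hub : ∀ k, Real.log (f k / P k) ≤ -Real.log q := by
    intro k
    have hratio : f k / P k ≤ 1 / q := by
      rw [div_le_div_iff₀ (hPpos k) hq]
      nlinarith [hPle k]
    calc Real.log (f k / P k) ≤ Real.log (1 / q) :=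
          Real.log_le_log (div_pos (hfpos k) (hPpos k)) hratio
      _ = -Real.log q := by rw [one_div, Real.log_inv]
  -- summability of the relEnt series at x
  set d := Real.log (A / x) with hddef
  have hd : 0 ≤ d := Real.log_nonneg (by rw [le_div_iff₀ hxpos]; linarith)
  have hlogxA : Real.log (x / A) = -d := by
    rw [hddef, ← Real.log_inv, inv_div]
  set a := fun k : ℕ => f k * Real.log (f k / P k) with hadef
  have habs : ∀ k : ℕ, |a k| ≤ f k * ((x - Real.log q) + k * d) := by
    intro k
    have hkd : 0 ≤ (k : ℝ) * d := by positivity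
    have hlb : e * (x / A) ^ k ≤ f k / P k := by
      have h1 : f k / (A ^ k / (Nat.factorial k : ℝ)) ≤ f k / P k :=
        div_le_div_of_nonneg_left (hfpos k).le (hPpos k) (hPub k)
      refine le_trans (le_of_eq ?_) h1
      rw [hfdef, hedef]
      unfold poissonPMF
      have hfk : ((Nat.factorial k : ℝ)) ≠ 0 := by positivity
      have hAk : (A : ℝ) ^ k ≠ 0 := by positivity
      rw [div_pow]
      field_simp
    have hloglb : -x + k * Real.log (x / A) ≤ Real.log (f k / P k) := by
      have h := Real.log_le_log (by positivity) hlb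
      rwa [Real.log_mul he.ne' (by positivity), hedef, Real.log_exp,
        Real.log_pow] at h
    rw [hlogxA] at hloglb
    have hlogabs : |Real.log (f k / P k)| ≤ (x - Real.log q) + k * d := by
      rw [abs_le]
      constructor
      · nlinarith [hub k]
      · nlinarith [hub k]
    calc |a k| = f k * |Real.log (f k / P k)| := by
          rw [hadef, abs_mul, abs_of_pos (hfpos k)]
      _ ≤ f k * ((x - Real.log q) + k * d) :=
          mul_le_mul_of_nonneg_left hlogabs (hfpos k).le
  have hasum : Summable a := by
    rw [← summable_abs_iff]
    refine Summable.of_nonneg_of_le (fun k => abs_nonneg _) habs ?_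
    have h1 : Summable (fun k : ℕ => (x - Real.log q) * f k) :=
      (summable_poissonPMF x).mul_left _
    have h2 : Summable (fun k : ℕ => d * ((k : ℝ) * f k)) :=
      (summable_nat_mul_poissonPMF x).mul_left d
    refine (h1.add h2).congr fun k => ?_
    ring
  -- the dominating series b
  set b : ℕ → ℝ := Function.update (fun k : ℕ => f k * (-Real.log q)) 0 (e * (C - x))
    with hbdef
  have hbsum : HasSum b (e * (C - x) - f 0 * (-Real.log q) + 1 * (-Real.log q)) := by
    exact ((hasSum_poissonPMF x).mul_right (-Real.log q)).update 0 (e * (C - x))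
  have hab : ∀ k, a k ≤ b k := by
    intro k
    rcases Nat.eq_zero_or_pos k with rfl | hk
    · rw [hbdef, Function.update_self]
      show f 0 * Real.log (f 0 / P 0) ≤ e * (C - x)
      have : Real.log (f 0 / P 0) = C - x := by
        rw [hf0, hP0, Real.log_div he.ne' (Real.exp_ne_zero _), hedef,
          Real.log_exp, Real.log_exp]
        ring
      rw [this, hf0]
    · rw [hbdef, Function.update_of_ne (Nat.pos_iff_ne_zero.mp hk)]
      exact mul_le_mul_of_nonneg_left (hub k) (hfpos k).le
  have key : C ≤ e * (C - x) - e * (-Real.log q) + 1 * (-Real.log q) := by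
    have h := Summable.tsum_le_tsum hab hasum hbsum.summable
    rw [hbsum.tsum_eq, hf0] at h
    have h2 : (∑' k, a k) = C := by rw [← hCx]; rfl
    linarith [h, h2.le, h2.ge]
  -- final algebra
  set t := x * e / (1 - e) with htdef
  have ht : t * (1 - e) = x * e := div_mul_cancel₀ _ h1e.ne'
  have hfinal : Real.log q ≤ -C - t := by
    by_contra h
    push_neg at h
    have h2 : (1 - e) * (-C - t) < (1 - e) * Real.log q :=
      mul_lt_mul_of_pos_left h h1e
    nlinarith [key, ht]
  calc q = Real.exp (Real.log q) := (Real.exp_log hq).symm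
    _ ≤ Real.exp (-C - x * Real.exp (-x) / (1 - Real.exp (-x))) := by
        rw [Real.exp_le_exp]
        rw [htdef, hedef] at hfinal
        exact hfinal
end

section
/- Suppose S = {0, A} with A > 0, weights p(0), p(A) > 0, p(0) + p(A) = 1, and C ∈ ℝ satisfies D(A) = C and D(0) = C (equivalently C = −log(p(0) + p(A)e^{−A})). Then equality holds in the location-dependent bound: p(A) = exp( −C − A·e^{−A}/(1 − e^{−A}) ). -/
open Real

lemma poisson_zero_succ (k : ℕ) : poissonPMF 0 (k + 1) = 0 := by
  simp [poissonPMF]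

lemma poisson_zero_zero : poissonPMF 0 0 = 1 := by simp [poissonPMF]

lemma poisson_pos {A : ℝ} (hA : 0 < A) (k : ℕ) : 0 < poissonPMF A k := by
  unfold poissonPMF
  positivity

lemma summable_poisson (A : ℝ) : Summable (poissonPMF A) := by
  have := (Real.summable_pow_div_factorial A).mul_right (Real.exp (-A))
  refine this.congr fun n => ?_
  unfold poissonPMF; ring

lemma tsum_poisson (A : ℝ) : ∑' k, poissonPMF A k = 1 := by
  have h : ∑' k : ℕ, A ^ k / (Nat.factorial k : ℝ) = Real.exp A := by
    rw [Real.exp_eq_exp_ℝ, NormedSpace.exp_eq_tsum_div]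
  calc ∑' k, poissonPMF A k = ∑' k : ℕ, (A ^ k / (Nat.factorial k : ℝ)) * Real.exp (-A) := by
        refine tsum_congr fun k => ?_; unfold poissonPMF; ring
    _ = (∑' k : ℕ, A ^ k / (Nat.factorial k : ℝ)) * Real.exp (-A) := by
        exact tsum_mul_right
    _ = 1 := by rw [h, ← Real.exp_add]; simp


/-- For a binary support `S = {0, A}` with `A > 0`, positive weights summing to one and
`D(A) = C = D(0)`, equality holds in the location-dependent bound:
`p(A) = exp (−C − A e^{-A}/(1 − e^{-A}))`. -/
theorem mass_binary_equality
    (A : ℝ) (hA : 0 < A) (p : ℝ → ℝ)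
    (hp0 : 0 < p 0) (hpA : 0 < p A) (hpsum : p 0 + p A = 1)
    (C : ℝ) (hCA : relEnt {0, A} p A = C) (hC0 : relEnt {0, A} p 0 = C) :
    p A = Real.exp (-C - A * Real.exp (-A) / (1 - Real.exp (-A))) := by
  have h0A : (0 : ℝ) ≠ A := hA.ne
  have hout : ∀ k, outPMF {0, A} p k = p 0 * poissonPMF 0 k + p A * poissonPMF A k := by
    intro k; unfold outPMF; rw [Finset.sum_pair h0A]
  set Q0 : ℝ := p 0 + p A * Real.exp (-A) with hQ0
  have hQ0pos : 0 < Q0 := by positivity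
  have houtz : outPMF {0, A} p 0 = Q0 := by
    rw [hout]; unfold poissonPMF; simp [hQ0]
  have houts : ∀ k, outPMF {0, A} p (k + 1) = p A * poissonPMF A (k + 1) := by
    intro k; rw [hout, poisson_zero_succ]; ring
  have hD0 : relEnt {0, A} p 0 = -Real.log Q0 := by
    unfold relEnt
    rw [tsum_eq_single 0]
    · rw [houtz, poisson_zero_zero, one_mul, Real.log_div one_ne_zero hQ0pos.ne', Real.log_one,
        zero_sub]
    · intro k hk
      obtain ⟨m, rfl⟩ := Nat.exists_eq_succ_of_ne_zero hk
      rw [poisson_zero_succ, zero_mul]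
  have hC : C = -Real.log Q0 := by rw [← hC0, hD0]
  have hfA : ∀ k, poissonPMF A (k + 1) * Real.log (poissonPMF A (k + 1) / outPMF {0, A} p (k + 1))
      = poissonPMF A (k + 1) * (-Real.log (p A)) := by
    intro k
    rw [houts]
    congr 1
    rw [div_mul_eq_div_div_swap, div_self (poisson_pos hA (k + 1)).ne',
      Real.log_div one_ne_zero hpA.ne', Real.log_one, zero_sub]
  have hsum_shift : Summable (fun k => poissonPMF A (k + 1)) := by
    exact (summable_nat_add_iff 1).mpr (summable_poisson A)
  have hts : ∑' k, poissonPMF A (k + 1) = 1 - Real.exp (-A) := by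
    have h1 := tsum_poisson A
    have h2 := Summable.tsum_eq_zero_add (summable_poisson A)
    rw [h2] at h1
    have : poissonPMF A 0 = Real.exp (-A) := by unfold poissonPMF; simp
    rw [this] at h1
    linarith
  have hsumg :
      Summable (fun k => poissonPMF A k * Real.log (poissonPMF A k / outPMF {0, A} p k)) := by
    rw [← summable_nat_add_iff 1]
    refine (hsum_shift.mul_right (-Real.log (p A))).congr fun k => (hfA k).symm
  have hDA : relEnt {0, A} p A
      = Real.exp (-A) * Real.log (Real.exp (-A) / Q0)
        + (1 - Real.exp (-A)) * (-Real.log (p A)) := by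
    unfold relEnt
    rw [Summable.tsum_eq_zero_add hsumg]
    congr 1
    · rw [houtz]; unfold poissonPMF; simp
    · calc ∑' k, poissonPMF A (k + 1) * Real.log (poissonPMF A (k + 1) / outPMF {0, A} p (k + 1))
          = ∑' k, poissonPMF A (k + 1) * (-Real.log (p A)) := tsum_congr hfA
        _ = (∑' k, poissonPMF A (k + 1)) * (-Real.log (p A)) := tsum_mul_right
        _ = (1 - Real.exp (-A)) * (-Real.log (p A)) := by rw [hts]
  have hlogdiv : Real.log (Real.exp (-A) / Q0) = -A - Real.log Q0 := by
    rw [Real.log_div (Real.exp_ne_zero _) hQ0pos.ne', Real.log_exp]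
  have heA : Real.exp (-A) < 1 := by
    rw [Real.exp_lt_one_iff]; linarith
  have hne : 1 - Real.exp (-A) ≠ 0 := by linarith
  have key : Real.log (p A) = -C - A * Real.exp (-A) / (1 - Real.exp (-A)) := by
    rw [hDA, hlogdiv] at hCA
    rw [hC] at hCA ⊢
    field_simp at hCA ⊢
    nlinarith [hCA]
  rw [← key, Real.exp_log hpA]
end

section
/- Let A ≥ e (Euler's number) and let x > 0 be a real number satisfying log(x/A) + 1/x ≤ 0. Then exp(−√(2(log A − 1))) ≤ x ≤ A − 1. (In particular, any interior support point of the capacity-achieving input, which satisfies this inequality, lies in this range.) -/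
open Real

lemma quad_le_exp {t : ℝ} (ht : 0 ≤ t) : 1 + t + t ^ 2 / 2 ≤ Real.exp t := by
  have := Real.sum_le_exp_of_nonneg ht 3
  simp [Finset.sum_range_succ, Nat.factorial] at this
  linarith

/-- If `A ≥ e` and `x > 0` satisfies `log (x/A) + 1/x ≤ 0`, then
`exp (−√(2 (log A − 1))) ≤ x ≤ A − 1`. -/
theorem interior_support_point_location
    (A x : ℝ) (hA : Real.exp 1 ≤ A) (hx : 0 < x)
    (h : Real.log (x / A) + 1 / x ≤ 0) :
    Real.exp (-Real.sqrt (2 * (Real.log A - 1))) ≤ x ∧ x ≤ A - 1 := by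
  have hA0 : 0 < A := lt_of_lt_of_le (Real.exp_pos 1) hA
  have hlog : Real.log (x / A) = Real.log x - Real.log A :=
    Real.log_div (ne_of_gt hx) (ne_of_gt hA0)
  have hlogA : 1 ≤ Real.log A := by
    have := Real.log_le_log (Real.exp_pos 1) hA
    simpa using this
  constructor
  · -- lower bound
    rcases le_or_gt 1 x with h1 | h1
    · calc Real.exp (-Real.sqrt (2 * (Real.log A - 1))) ≤ Real.exp 0 := by
            apply Real.exp_le_exp.2
            simpa using Real.sqrt_nonneg _
        _ = 1 := Real.exp_zero
        _ ≤ x := h1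
    · set t := -Real.log x with htdef
      have ht0 : 0 < t := by
        have := Real.log_neg hx h1
        simp [htdef]; linarith
      have hexpt : Real.exp t = 1 / x := by
        rw [htdef, Real.exp_neg, Real.exp_log hx]
        simp
      have key : Real.exp t ≤ Real.log A + t := by
        rw [hexpt, htdef]
        rw [hlog] at h
        linarith
      have hq := quad_le_exp ht0.le
      have ht2 : t ^ 2 ≤ 2 * (Real.log A - 1) := by nlinarith
      have hts : t ≤ Real.sqrt (2 * (Real.log A - 1)) :=
        by exact (Real.le_sqrt' ht0).mpr ht2
      have : -Real.sqrt (2 * (Real.log A - 1)) ≤ Real.log x := by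
        simp only [htdef] at hts; linarith
      calc Real.exp (-Real.sqrt (2 * (Real.log A - 1))) ≤ Real.exp (Real.log x) :=
            Real.exp_le_exp.2 this
        _ = x := Real.exp_log hx
  · -- upper bound
    have h2 : Real.log (x / A) ≤ -(1 / x) := by linarith
    have h3 : x / A ≤ Real.exp (-(1 / x)) :=
      (Real.log_le_iff_le_exp (div_pos hx hA0)).1 h2
    have h4 : x ≤ A * Real.exp (-(1 / x)) := by
      rw [div_le_iff₀ hA0] at h3; linarith
    have h5 : x * Real.exp (1 / x) ≤ A := by
      have he : Real.exp (-(1/x)) * Real.exp (1/x) = 1 := by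
        rw [← Real.exp_add]; simp
      have hep : 0 < Real.exp (1/x) := Real.exp_pos _
      nlinarith
    have h6 : 1 + 1 / x ≤ Real.exp (1 / x) := by linarith [Real.add_one_le_exp (1/x)]
    have h7 := mul_le_mul_of_nonneg_left h6 hx.le
    have h8 : x * (1 / x) = 1 := mul_one_div_cancel (ne_of_gt hx)
    nlinarith
end

section
/- Suppose A ∈ S and C ∈ ℝ. Define m(k) = (k+1)·P_Y(k+1)/P_Y(k) for k ∈ ℕ (the posterior mean of the input given output k), and define ψ(k) = k·log(1/m(k−1)) + log(k!·P_Y(k)) + C + k for k ≥ 1, with ψ(0) = log(P_Y(0)) + C (convention: the first term vanishes at k = 0). Then ψ(k) ≥ −A + log p(A) + C + k for every k ∈ ℕ; in particular ψ(k) ≥ 0 for every natural number k ≥ A − log p(A) − C. -/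
open Real

/-- Posterior mean of the input given output `k`: `m(k) = (k+1) P_Y(k+1) / P_Y(k)`. -/
noncomputable def postMean (S : Finset ℝ) (p : ℝ → ℝ) (k : ℕ) : ℝ :=
  ((k : ℝ) + 1) * outPMF S p (k + 1) / outPMF S p k

/-- `ψ(k) = k log (1/m(k−1)) + log (k! P_Y(k)) + C + k`, with the first term vanishing at
`k = 0` (so `ψ(0) = log P_Y(0) + C`). -/
noncomputable def psiFun (S : Finset ℝ) (p : ℝ → ℝ) (C : ℝ) (k : ℕ) : ℝ :=
  (k : ℝ) * Real.log (1 / postMean S p (k - 1)) +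
    Real.log ((Nat.factorial k : ℝ) * outPMF S p k) + C + k

lemma poissonPMF_succ (x : ℝ) (k : ℕ) :
    ((k : ℝ) + 1) * poissonPMF x (k + 1) = x * poissonPMF x k := by
  have hk : ((Nat.factorial k : ℝ)) ≠ 0 := by exact_mod_cast (Nat.factorial_pos k).ne'
  have hk1 : ((k : ℝ) + 1) ≠ 0 := by positivity
  simp only [poissonPMF, pow_succ, Nat.factorial_succ, Nat.cast_mul, Nat.cast_add, Nat.cast_one]
  field_simp

/-- If `A ∈ S`, then `ψ(k) ≥ −A + log p(A) + C + k` for all `k`; in particular `ψ(k) ≥ 0`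
for every `k ≥ A − log p(A) − C`. -/
theorem psi_lower_bound
    (A : ℝ) (hA : 0 < A) (S : Finset ℝ) (hS : (S : Set ℝ) ⊆ Set.Icc 0 A)
    (p : ℝ → ℝ) (hp : ∀ x ∈ S, 0 < p x) (hpsum : ∑ x ∈ S, p x = 1)
    (hAS : A ∈ S) (C : ℝ) :
    (∀ k : ℕ, -A + Real.log (p A) + C + k ≤ psiFun S p C k) ∧
    (∀ k : ℕ, A - Real.log (p A) - C ≤ (k : ℝ) → 0 ≤ psiFun S p C k) := by
  have hpA : 0 < p A := hp A hAS
  have hterm_nonneg : ∀ j : ℕ, ∀ x ∈ S, 0 ≤ p x * poissonPMF x j := fun j x hx =>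
    mul_nonneg (hp x hx).le (poissonPMF_nonneg (hS hx).1 j)
  have hPY : ∀ j : ℕ, 0 < outPMF S p j := by
    intro j
    exact Finset.sum_pos' (hterm_nonneg j)
      ⟨A, hAS, mul_pos hpA (poissonPMF_pos hA j)⟩
  have hm_pos : ∀ j : ℕ, 0 < postMean S p j := by
    intro j
    exact div_pos (mul_pos (by positivity) (hPY (j+1))) (hPY j)
  have hm_le : ∀ j : ℕ, postMean S p j ≤ A := by
    intro j
    rw [postMean, div_le_iff₀ (hPY j)]
    have : ((j:ℝ)+1) * outPMF S p (j+1) = ∑ x ∈ S, x * (p x * poissonPMF x j) := by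
      rw [outPMF, Finset.mul_sum]
      refine Finset.sum_congr rfl fun x hx => ?_
      rw [mul_left_comm, poissonPMF_succ]; ring
    rw [this, outPMF, Finset.mul_sum]
    refine Finset.sum_le_sum fun x hx => ?_
    exact mul_le_mul_of_nonneg_right (hS hx).2 (hterm_nonneg j x hx)
  -- log bound on 1/m
  have hlogm : ∀ j : ℕ, -Real.log A ≤ Real.log (1 / postMean S p j) := by
    intro j
    rw [one_div, Real.log_inv, neg_le_neg_iff]
    exact Real.log_le_log (hm_pos j) (hm_le j)
  -- k! P_Y(k) ≥ p A * A^k * e^{-A}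
  have hfac : ∀ k : ℕ, p A * (A ^ k * Real.exp (-A)) ≤ (Nat.factorial k : ℝ) * outPMF S p k := by
    intro k
    have hkpos : (0:ℝ) < Nat.factorial k := by exact_mod_cast Nat.factorial_pos k
    have : (Nat.factorial k : ℝ) * outPMF S p k = ∑ x ∈ S, p x * (x ^ k * Real.exp (-x)) := by
      rw [outPMF, Finset.mul_sum]
      refine Finset.sum_congr rfl fun x hx => ?_
      rw [poissonPMF]; field_simp
    rw [this]
    refine Finset.single_le_sum (f := fun x => p x * (x ^ k * Real.exp (-x))) (fun x hx => ?_) hAS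
    have hx0 := (hS hx).1
    have := (hp x hx).le
    positivity
  have key : ∀ k : ℕ, -A + Real.log (p A) + C + k ≤ psiFun S p C k := by
    intro k
    rw [psiFun]
    have h1 : (k:ℝ) * (-Real.log A) ≤ (k:ℝ) * Real.log (1 / postMean S p (k-1)) :=
      mul_le_mul_of_nonneg_left (hlogm (k-1)) (Nat.cast_nonneg k)
    have hlhs_pos : (0:ℝ) < p A * (A ^ k * Real.exp (-A)) := by positivity
    have h2 : Real.log (p A * (A ^ k * Real.exp (-A))) ≤
        Real.log ((Nat.factorial k : ℝ) * outPMF S p k) :=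
      Real.log_le_log hlhs_pos (hfac k)
    have h3 : Real.log (p A * (A ^ k * Real.exp (-A)))
        = Real.log (p A) + k * Real.log A - A := by
      rw [Real.log_mul hpA.ne' (by positivity), Real.log_mul (by positivity)
        (Real.exp_ne_zero _), Real.log_pow, Real.log_exp]
      ring
    nlinarith [h1, h2, h3]
  refine ⟨key, fun k hk => ?_⟩
  have := key k
  linarith
end

section
/- Suppose S contains a point x₀ > 0 (so that P_Y(k) > 0 for all k ∈ ℕ), and let G(x) = Σ_{k∈ℕ} P_{Y|X}(k|x) · log( 1/(k!·P_Y(k)) ) for x > 0. Then for every x > 0, G is differentiable at x with derivative G′(x) = Σ_{k∈ℕ} P_{Y|X}(k|x) · log( P_Y(k) / ((k+1)·P_Y(k+1)) ), i.e., G′(x) = Σ_{k∈ℕ} P_{Y|X}(k|x) · log(1/m(k)) where m(k) = (k+1)P_Y(k+1)/P_Y(k) is the posterior mean of the input given output k. -/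
open Real

/-- `G(x) = Σ_k P_{Y|X}(k|x) log (1/(k! P_Y(k)))`. -/
noncomputable def Gfun (S : Finset ℝ) (p : ℝ → ℝ) (x : ℝ) : ℝ :=
  ∑' k : ℕ, poissonPMF x k * Real.log (1 / ((Nat.factorial k : ℝ) * outPMF S p k))

lemma abs_log_le_of_le {a t b : ℝ} (ha : 0 < a) (hat : a ≤ t) (htb : t ≤ b) :
    |Real.log t| ≤ |Real.log a| + |Real.log b| := by
  have h1 : Real.log a ≤ Real.log t := Real.log_le_log ha hat
  have h2 : Real.log t ≤ Real.log b := Real.log_le_log (ha.trans_le hat) htb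
  have h3 := neg_abs_le (Real.log a)
  have h4 := le_abs_self (Real.log b)
  have h5 := abs_nonneg (Real.log a)
  have h6 := abs_nonneg (Real.log b)
  rw [abs_le]; constructor <;> linarith

lemma nat_le_two_pow (k : ℕ) : (k : ℝ) ≤ 2 ^ k := by
  exact_mod_cast (Nat.lt_two_pow_self (n := k)).le

lemma one_le_two_pow_real (k : ℕ) : (1 : ℝ) ≤ 2 ^ k := by
  exact_mod_cast Nat.one_le_two_pow (n := k)

/-- `G` is differentiable at every `x > 0` with
`G'(x) = Σ_k P_{Y|X}(k|x) log (P_Y(k) / ((k+1) P_Y(k+1)))`, i.e. the derivative equals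
`Σ_k P_{Y|X}(k|x) log (1/m(k))` where `m(k) = (k+1)P_Y(k+1)/P_Y(k)` is the posterior mean. -/
theorem Gfun_hasDerivAt
    (A : ℝ) (hA : 0 < A) (S : Finset ℝ) (hS : (S : Set ℝ) ⊆ Set.Icc 0 A)
    (p : ℝ → ℝ) (hp : ∀ x ∈ S, 0 < p x) (hpsum : ∑ x ∈ S, p x = 1)
    (x₀ : ℝ) (hx₀S : x₀ ∈ S) (hx₀pos : 0 < x₀) :
    ∀ x : ℝ, 0 < x →
      HasDerivAt (Gfun S p)
        (∑' k : ℕ, poissonPMF x k *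
          Real.log (outPMF S p k / (((k : ℝ) + 1) * outPMF S p (k + 1)))) x := by
  intro x hx
  have hfac : ∀ k : ℕ, (0 : ℝ) < (Nat.factorial k : ℝ) := by
    intro k; exact_mod_cast Nat.factorial_pos k
  -- positivity of the output pmf
  have hsingle : ∀ k : ℕ, p x₀ * poissonPMF x₀ k ≤ outPMF S p k := by
    intro k
    apply Finset.single_le_sum (f := fun y => p y * poissonPMF y k) ?_ hx₀S
    intro y hy
    have hy0 : 0 ≤ y := (hS hy).1
    have : 0 ≤ poissonPMF y k := by unfold poissonPMF; positivity
    exact mul_nonneg (hp y hy).le this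
  have hP : ∀ k, 0 < outPMF S p k := by
    intro k
    refine lt_of_lt_of_le ?_ (hsingle k)
    apply mul_pos (hp x₀ hx₀S)
    unfold poissonPMF
    positivity
  -- bounds on k! * P_Y(k)
  have hlow : ∀ k : ℕ, p x₀ * (x₀ ^ k * Real.exp (-x₀)) ≤ (Nat.factorial k : ℝ) * outPMF S p k := by
    intro k
    have := mul_le_mul_of_nonneg_left (hsingle k) (hfac k).le
    refine le_trans (le_of_eq ?_) this
    unfold poissonPMF
    field_simp
  have hhigh : ∀ k : ℕ, (Nat.factorial k : ℝ) * outPMF S p k ≤ A ^ k := by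
    intro k
    unfold outPMF
    rw [Finset.mul_sum]
    calc (∑ y ∈ S, (Nat.factorial k : ℝ) * (p y * poissonPMF y k))
        ≤ ∑ y ∈ S, p y * A ^ k := by
          apply Finset.sum_le_sum
          intro y hy
          have hy0 : 0 ≤ y := (hS hy).1
          have hyA : y ≤ A := (hS hy).2
          unfold poissonPMF
          rw [show (Nat.factorial k : ℝ) * (p y * (y ^ k * Real.exp (-y) / (Nat.factorial k : ℝ)))
              = p y * (y ^ k * Real.exp (-y)) by field_simp]
          apply mul_le_mul_of_nonneg_left ?_ (hp y hy).le
          calc y ^ k * Real.exp (-y) ≤ y ^ k * 1 := by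
                apply mul_le_mul_of_nonneg_left ?_ (by positivity)
                exact Real.exp_le_one_iff.2 (by linarith)
            _ = y ^ k := mul_one _
            _ ≤ A ^ k := pow_le_pow_left₀ hy0 hyA k
      _ = A ^ k := by rw [← Finset.sum_mul, hpsum, one_mul]
  -- the coefficients and their linear bound
  set c : ℕ → ℝ := fun k => Real.log (1 / ((Nat.factorial k : ℝ) * outPMF S p k)) with hc_def
  set C : ℝ := |Real.log (p x₀)| + x₀ with hC_def
  set D : ℝ := |Real.log x₀| + |Real.log A| with hD_def
  have hC0 : 0 ≤ C := by rw [hC_def]; positivity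
  have hD0 : 0 ≤ D := by rw [hD_def]; positivity
  have hcb : ∀ k : ℕ, |c k| ≤ C + D * k := by
    intro k
    have hck : c k = -Real.log ((Nat.factorial k : ℝ) * outPMF S p k) := by
      simp only [hc_def, one_div, Real.log_inv]
    have hL : 0 < p x₀ * (x₀ ^ k * Real.exp (-x₀)) := by
      have := hp x₀ hx₀S; positivity
    have hbnd := abs_log_le_of_le hL (hlow k) (hhigh k)
    have e1 : |Real.log (p x₀ * (x₀ ^ k * Real.exp (-x₀)))|
        ≤ |Real.log (p x₀)| + x₀ + k * |Real.log x₀| := by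
      rw [Real.log_mul (hp x₀ hx₀S).ne' (by positivity),
        Real.log_mul (by positivity) (Real.exp_ne_zero _), Real.log_pow, Real.log_exp]
      calc |Real.log (p x₀) + ((k : ℝ) * Real.log x₀ + -x₀)|
          ≤ |Real.log (p x₀)| + (|(k : ℝ) * Real.log x₀| + |(-x₀)|) :=
            (abs_add_le _ _).trans (by gcongr; exact abs_add_le _ _)
        _ = |Real.log (p x₀)| + ((k : ℝ) * |Real.log x₀| + x₀) := by
            rw [abs_mul, abs_neg, Nat.abs_cast, abs_of_pos hx₀pos]
        _ = |Real.log (p x₀)| + x₀ + k * |Real.log x₀| := by ring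
    have e2 : |Real.log (A ^ k)| = k * |Real.log A| := by
      rw [Real.log_pow, abs_mul, abs_of_nonneg (Nat.cast_nonneg k)]
    rw [hck, abs_neg]
    calc |Real.log ((Nat.factorial k : ℝ) * outPMF S p k)|
        ≤ |Real.log (p x₀ * (x₀ ^ k * Real.exp (-x₀)))| + |Real.log (A ^ k)| := hbnd
      _ ≤ (|Real.log (p x₀)| + x₀ + k * |Real.log x₀|) + k * |Real.log A| := by
          rw [e2]; linarith [e1]
      _ = C + D * k := by rw [hC_def, hD_def]; ring
  have hcd : ∀ k : ℕ, C + D * k ≤ (C + D) * 2 ^ k := by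
    intro k
    have h1 := one_le_two_pow_real k
    have h2 := nat_le_two_pow k
    nlinarith
  -- setup for term-by-term differentiation on the interval (0, B)
  set B : ℝ := x + 1 with hB_def
  have hB1 : (1 : ℝ) < B := by rw [hB_def]; linarith
  have hB0 : (0 : ℝ) < B := by linarith
  set u : ℕ → ℝ := fun k => 2 * (C + D) * ((4 * B) ^ k / (Nat.factorial k : ℝ)) with hu_def
  have hu : Summable u := (Real.summable_pow_div_factorial (4 * B)).mul_left _
  set g : ℕ → ℝ → ℝ := fun k y => poissonPMF y k * c k with hg_def
  set g' : ℕ → ℝ → ℝ :=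
    fun k y => ((k : ℝ) * y ^ (k - 1) - y ^ k) * Real.exp (-y) / (Nat.factorial k : ℝ) * c k
    with hg'_def
  have hderiv : ∀ k : ℕ, ∀ y : ℝ, y ∈ Set.Ioo (0 : ℝ) B → HasDerivAt (g k) (g' k y) y := by
    intro k y _
    have h1 : HasDerivAt (fun z : ℝ => z ^ k) ((k : ℝ) * y ^ (k - 1)) y := hasDerivAt_pow k y
    have h2 : HasDerivAt (fun z : ℝ => Real.exp (-z)) (-Real.exp (-y)) y := by
      simpa [Function.comp_def] using (Real.hasDerivAt_exp (-y)).comp y (hasDerivAt_neg y)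
    have h3 := ((h1.mul h2).div_const (Nat.factorial k : ℝ)).mul_const (c k)
    have hfun : g k = fun z : ℝ => z ^ k * Real.exp (-z) / (Nat.factorial k : ℝ) * c k := by
      funext z; simp [hg_def, poissonPMF]
    rw [hfun]
    refine HasDerivAt.congr_deriv (by exact h3) ?_
    simp only [hg'_def]
    ring
  -- bound on the derivatives, uniform on (0, B)
  have hbound : ∀ k : ℕ, ∀ y : ℝ, y ∈ Set.Ioo (0 : ℝ) B → ‖g' k y‖ ≤ u k := by
    intro k y hy
    obtain ⟨hy0, hyB⟩ := hy
    have hyBle : y ≤ B := hyB.le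
    have hyp1 : (0 : ℝ) ≤ y ^ (k - 1) := by positivity
    have hyp : (0 : ℝ) ≤ y ^ k := by positivity
    have hBp : (0 : ℝ) ≤ B ^ k := by positivity
    have hb1 : |(k : ℝ) * y ^ (k - 1) - y ^ k| ≤ ((k : ℝ) + 1) * B ^ k := by
      have hyk1 : y ^ (k - 1) ≤ B ^ k := by
        calc y ^ (k - 1) ≤ B ^ (k - 1) := pow_le_pow_left₀ hy0.le hyBle _
          _ ≤ B ^ k := pow_le_pow_right₀ hB1.le (Nat.sub_le k 1)
      have hyk : y ^ k ≤ B ^ k := pow_le_pow_left₀ hy0.le hyBle _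
      have h1 : (k : ℝ) * y ^ (k - 1) ≤ (k : ℝ) * B ^ k :=
        mul_le_mul_of_nonneg_left hyk1 (Nat.cast_nonneg k)
      have hk0 : (0 : ℝ) ≤ (k : ℝ) * y ^ (k - 1) := mul_nonneg (Nat.cast_nonneg k) hyp1
      have hkB : (0 : ℝ) ≤ (k : ℝ) * B ^ k := mul_nonneg (Nat.cast_nonneg k) hBp
      have hexpand : ((k : ℝ) + 1) * B ^ k = (k : ℝ) * B ^ k + B ^ k := by ring
      rw [abs_sub_le_iff]
      constructor
      · linarith
      · linarith
    have hexp : Real.exp (-y) ≤ 1 := Real.exp_le_one_iff.2 (by linarith)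
    have hck := hcb k
    have hckn : (0 : ℝ) ≤ C + D * k := le_trans (abs_nonneg _) hck
    rw [Real.norm_eq_abs]
    simp only [hg'_def]
    rw [abs_mul, abs_div, abs_mul, abs_of_pos (Real.exp_pos _), abs_of_pos (hfac k)]
    have m1 : |(k : ℝ) * y ^ (k - 1) - y ^ k| * Real.exp (-y) ≤ ((k : ℝ) + 1) * B ^ k := by
      calc |(k : ℝ) * y ^ (k - 1) - y ^ k| * Real.exp (-y)
          ≤ |(k : ℝ) * y ^ (k - 1) - y ^ k| * 1 :=
            mul_le_mul_of_nonneg_left hexp (abs_nonneg _)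
        _ = |(k : ℝ) * y ^ (k - 1) - y ^ k| := mul_one _
        _ ≤ ((k : ℝ) + 1) * B ^ k := hb1
    have step1 : |(k : ℝ) * y ^ (k - 1) - y ^ k| * Real.exp (-y) / (Nat.factorial k : ℝ) * |c k|
        ≤ ((k : ℝ) + 1) * B ^ k / (Nat.factorial k : ℝ) * (C + D * k) := by
      apply mul_le_mul ?_ hck (abs_nonneg _) ?_
      · exact (div_le_div_iff_of_pos_right (hfac k)).2 m1
      · positivity
    refine step1.trans ?_
    have hk2 : (k : ℝ) + 1 ≤ 2 * 2 ^ k := by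
      have := nat_le_two_pow k
      have := one_le_two_pow_real k
      linarith
    have hmul : ((k : ℝ) + 1) * (C + D * k) ≤ 2 * (C + D) * 4 ^ k := by
      calc ((k : ℝ) + 1) * (C + D * k) ≤ (2 * 2 ^ k) * ((C + D) * 2 ^ k) :=
            mul_le_mul hk2 (hcd k) hckn (by positivity)
        _ = 2 * (C + D) * 4 ^ k := by
            rw [show (4 : ℝ) = 2 * 2 by norm_num, mul_pow]; ring
    simp only [hu_def]
    calc ((k : ℝ) + 1) * B ^ k / (Nat.factorial k : ℝ) * (C + D * k)
        = ((k : ℝ) + 1) * (C + D * k) * (B ^ k / (Nat.factorial k : ℝ)) := by ring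
      _ ≤ 2 * (C + D) * 4 ^ k * (B ^ k / (Nat.factorial k : ℝ)) :=
          mul_le_mul_of_nonneg_right hmul (by positivity)
      _ = 2 * (C + D) * ((4 * B) ^ k / (Nat.factorial k : ℝ)) := by
          rw [mul_pow]; ring
  -- pmf bounds at x
  have hpmf_nonneg : ∀ k : ℕ, 0 ≤ poissonPMF x k := by
    intro k; unfold poissonPMF; positivity
  have hpmf_le : ∀ k : ℕ, poissonPMF x k ≤ B ^ k / (Nat.factorial k : ℝ) := by
    intro k
    unfold poissonPMF
    gcongr
    calc x ^ k * Real.exp (-x) ≤ x ^ k * 1 := by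
          apply mul_le_mul_of_nonneg_left ?_ (by positivity)
          exact Real.exp_le_one_iff.2 (by linarith)
      _ = x ^ k := mul_one _
      _ ≤ B ^ k := pow_le_pow_left₀ hx.le (by rw [hB_def]; linarith) k
  have hkey : ∀ k : ℕ, B ^ k / (Nat.factorial k : ℝ) * ((C + D) * 2 ^ k) ≤ u k := by
    intro k
    simp only [hu_def]
    have h24 : (2 : ℝ) ^ k * B ^ k ≤ (4 * B) ^ k := by
      rw [mul_pow]
      exact mul_le_mul_of_nonneg_right
        (pow_le_pow_left₀ (by norm_num) (by norm_num) k) (by positivity)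
    calc B ^ k / (Nat.factorial k : ℝ) * ((C + D) * 2 ^ k)
        = (C + D) * (2 ^ k * B ^ k) / (Nat.factorial k : ℝ) := by ring
      _ ≤ (C + D) * (4 * B) ^ k / (Nat.factorial k : ℝ) := by gcongr
      _ ≤ 2 * (C + D) * ((4 * B) ^ k / (Nat.factorial k : ℝ)) := by
          rw [mul_div_assoc]
          apply mul_le_mul_of_nonneg_right (by linarith) (by positivity)
  -- summability statements
  have hs1 : Summable (fun k : ℕ => poissonPMF x k * c k) := by
    apply Summable.of_norm_bounded hu
    intro k
    rw [Real.norm_eq_abs, abs_mul, abs_of_nonneg (hpmf_nonneg k)]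
    calc poissonPMF x k * |c k|
        ≤ B ^ k / (Nat.factorial k : ℝ) * ((C + D) * 2 ^ k) :=
          mul_le_mul (hpmf_le k) ((hcb k).trans (hcd k)) (abs_nonneg _) (by positivity)
      _ ≤ u k := hkey k
  have hs2 : Summable (fun k : ℕ => poissonPMF x k * c (k + 1)) := by
    apply Summable.of_norm_bounded (hu.mul_left 2)
    intro k
    rw [Real.norm_eq_abs, abs_mul, abs_of_nonneg (hpmf_nonneg k)]
    have hc1 : |c (k + 1)| ≤ 2 * ((C + D) * 2 ^ k) := by
      have h1 := hcb (k + 1)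
      have h2 := hcd k
      have h3 := one_le_two_pow_real k
      have h4 := nat_le_two_pow k
      push_cast at h1
      nlinarith
    calc poissonPMF x k * |c (k + 1)|
        ≤ B ^ k / (Nat.factorial k : ℝ) * (2 * ((C + D) * 2 ^ k)) :=
          mul_le_mul (hpmf_le k) hc1 (abs_nonneg _) (by positivity)
      _ = 2 * (B ^ k / (Nat.factorial k : ℝ) * ((C + D) * 2 ^ k)) := by ring
      _ ≤ 2 * u k := by
          apply mul_le_mul_of_nonneg_left (hkey k) (by norm_num)
  set h : ℕ → ℝ :=
    fun k => (k : ℝ) * x ^ (k - 1) * Real.exp (-x) / (Nat.factorial k : ℝ) * c k with hh_def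
  have hshift : ∀ n : ℕ, h (n + 1) = poissonPMF x n * c (n + 1) := by
    intro n
    simp only [hh_def]
    rw [Nat.add_sub_cancel, Nat.factorial_succ]
    unfold poissonPMF
    have h1 : ((n : ℝ) + 1) ≠ 0 := by positivity
    have h2 : ((Nat.factorial n : ℝ)) ≠ 0 := (hfac n).ne'
    push_cast
    field_simp
  have hs3 : Summable h := by
    apply (summable_nat_add_iff 1).mp
    have : (fun n : ℕ => h (n + 1)) = fun n : ℕ => poissonPMF x n * c (n + 1) :=
      funext hshift
    rw [this]
    exact hs2
  have hsplit : ∀ k : ℕ, g' k x = h k - poissonPMF x k * c k := by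
    intro k
    simp only [hg'_def, hh_def]
    unfold poissonPMF
    ring
  have h0 : h 0 = 0 := by simp [hh_def]
  -- the sum of the derivatives equals the claimed formula
  have hfinal : (∑' k : ℕ, g' k x)
      = ∑' k : ℕ, poissonPMF x k *
          Real.log (outPMF S p k / (((k : ℝ) + 1) * outPMF S p (k + 1))) := by
    calc (∑' k : ℕ, g' k x)
        = ∑' k : ℕ, (h k - poissonPMF x k * c k) := tsum_congr hsplit
      _ = (∑' k : ℕ, h k) - ∑' k : ℕ, poissonPMF x k * c k := Summable.tsum_sub hs3 hs1
      _ = (∑' k : ℕ, poissonPMF x k * c (k + 1)) - ∑' k : ℕ, poissonPMF x k * c k := by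
          rw [Summable.tsum_eq_zero_add hs3, h0, zero_add]
          congr 1
          exact tsum_congr hshift
      _ = ∑' k : ℕ, (poissonPMF x k * c (k + 1) - poissonPMF x k * c k) :=
          (Summable.tsum_sub hs2 hs1).symm
      _ = ∑' k : ℕ, poissonPMF x k *
            Real.log (outPMF S p k / (((k : ℝ) + 1) * outPMF S p (k + 1))) := by
          apply tsum_congr
          intro k
          rw [← mul_sub]
          congr 1
          have hp1 : (0 : ℝ) < (Nat.factorial k : ℝ) * outPMF S p k := mul_pos (hfac k) (hP k)
          have hp2 : (0 : ℝ) < (Nat.factorial (k + 1) : ℝ) * outPMF S p (k + 1) :=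
            mul_pos (hfac (k + 1)) (hP (k + 1))
          have hck : c k = -Real.log ((Nat.factorial k : ℝ) * outPMF S p k) := by
            simp only [hc_def, one_div, Real.log_inv]
          have hck1 : c (k + 1) = -Real.log ((Nat.factorial (k + 1) : ℝ) * outPMF S p (k + 1)) := by
            simp only [hc_def, one_div, Real.log_inv]
          rw [hck, hck1]
          rw [show -Real.log ((Nat.factorial (k + 1) : ℝ) * outPMF S p (k + 1)) -
              -Real.log ((Nat.factorial k : ℝ) * outPMF S p k)
              = Real.log ((Nat.factorial k : ℝ) * outPMF S p k) -
                Real.log ((Nat.factorial (k + 1) : ℝ) * outPMF S p (k + 1)) by ring]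
          rw [← Real.log_div hp1.ne' hp2.ne']
          congr 1
          have e : ((Nat.factorial (k + 1) : ℝ)) = ((k : ℝ) + 1) * (Nat.factorial k : ℝ) := by
            rw [Nat.factorial_succ]; push_cast; ring
          rw [e, show ((k : ℝ) + 1) * (Nat.factorial k : ℝ) * outPMF S p (k + 1)
              = (Nat.factorial k : ℝ) * (((k : ℝ) + 1) * outPMF S p (k + 1)) by ring,
            mul_div_mul_left _ _ (hfac k).ne']
  -- assemble
  have hxmem : x ∈ Set.Ioo (0 : ℝ) B := ⟨hx, by rw [hB_def]; linarith⟩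
  have hg0 : Summable fun k : ℕ => g k x := hs1
  have main := hasDerivAt_tsum_of_isPreconnected hu isOpen_Ioo isPreconnected_Ioo
    hderiv hbound hxmem hg0 hxmem
  have hGeq : Gfun S p = fun z : ℝ => ∑' k : ℕ, g k z := rfl
  rw [hGeq, ← hfinal]
  exact main
end

section
/- Suppose S contains a point x₀ > 0 (so that P_Y(k) > 0 for all k ∈ ℕ), and let i(x) = D(x) for x > 0. Then i is twice differentiable on (0, ∞) and for every x > 0, i″(x) = Σ_{k∈ℕ} P_{Y|X}(k|x) · log(1/m(k+1)) − i′(x) + log x + 1/x, where m(k) = (k+1)·P_Y(k+1)/P_Y(k) is the posterior mean of the input given output k. -/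
open Real

namespace RelEntAux

lemma factC_pos (k : ℕ) : (0:ℝ) < (Nat.factorial k : ℝ) := by
  exact_mod_cast Nat.factorial_pos k

lemma exp_tsum (x : ℝ) : (∑' k : ℕ, x ^ k / (Nat.factorial k : ℝ)) = Real.exp x := by
  rw [Real.exp_eq_exp_ℝ, NormedSpace.exp_eq_tsum_div]

lemma summable_mul_pow (x : ℝ) :
    Summable (fun k : ℕ => (k : ℝ) * x ^ k / (Nat.factorial k : ℝ)) := by
  have h' : Summable (fun k : ℕ => x * (x ^ k / (Nat.factorial k : ℝ))) :=
    (Real.summable_pow_div_factorial x).mul_left x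
  refine (summable_nat_add_iff 1).mp (h'.congr fun k => ?_)
  have h1 : ((Nat.factorial k : ℝ)) ≠ 0 := (factC_pos k).ne'
  have h2 : ((k:ℝ) + 1) ≠ 0 := by positivity
  rw [Nat.factorial_succ]
  push_cast
  field_simp
  ring

lemma summable_poly (C D x : ℝ) :
    Summable (fun k : ℕ => (C + D * k) * x ^ k / (Nat.factorial k : ℝ)) := by
  have h := ((Real.summable_pow_div_factorial x).mul_left C).add
    ((summable_mul_pow x).mul_left D)
  exact h.congr fun k => by ring

lemma summable_linbound (C D x : ℝ) {w : ℕ → ℝ} (hw : ∀ k, |w k| ≤ C + D * k) :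
    Summable (fun k : ℕ => w k * x ^ k / (Nat.factorial k : ℝ)) := by
  refine Summable.of_norm_bounded (summable_poly C D |x|) fun k => ?_
  have h1 : ‖w k * x ^ k / (Nat.factorial k : ℝ)‖
      = |w k| * (|x| ^ k / (Nat.factorial k : ℝ)) := by
    rw [Real.norm_eq_abs, abs_div, abs_mul, abs_pow, Nat.abs_cast]
    ring
  have h2 : (C + D * k) * |x| ^ k / (Nat.factorial k : ℝ)
      = (C + D * k) * (|x| ^ k / (Nat.factorial k : ℝ)) := by ring
  rw [h1, h2]
  exact mul_le_mul_of_nonneg_right (hw k) (by positivity)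

lemma summable_u (C D x : ℝ) :
    Summable (fun k : ℕ => (C + D * k) * ((k : ℝ) * x ^ (k - 1)) / (Nat.factorial k : ℝ)) := by
  refine (summable_nat_add_iff 1).mp ((summable_poly (C + D) D x).congr fun k => ?_)
  have h1 : ((Nat.factorial k : ℝ)) ≠ 0 := (factC_pos k).ne'
  have h2 : ((k:ℝ) + 1) ≠ 0 := by positivity
  rw [Nat.add_sub_cancel, Nat.factorial_succ]
  push_cast
  field_simp
  ring

lemma hasDerivAt_tsum_pow (C D : ℝ) {c : ℕ → ℝ} (hc : ∀ k, |c k| ≤ C + D * k) (x : ℝ) :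
    HasDerivAt (fun t : ℝ => ∑' k : ℕ, c k * t ^ k / (Nat.factorial k : ℝ))
      (∑' k : ℕ, c (k + 1) * x ^ k / (Nat.factorial k : ℝ)) x := by
  have hC : ∀ k : ℕ, (0:ℝ) ≤ C + D * k := fun k => le_trans (abs_nonneg _) (hc k)
  have bnd : ∀ (r t : ℝ), |t| ≤ r → ∀ k : ℕ,
      ‖c k * ((k:ℝ) * t ^ (k - 1)) / (Nat.factorial k : ℝ)‖
        ≤ (C + D * k) * ((k:ℝ) * r ^ (k - 1)) / (Nat.factorial k : ℝ) := by
    intro r t htr k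
    have hnorm : ‖c k * ((k:ℝ) * t ^ (k - 1)) / (Nat.factorial k : ℝ)‖
        = |c k| * ((k:ℝ) * |t| ^ (k - 1)) / (Nat.factorial k : ℝ) := by
      rw [Real.norm_eq_abs, abs_div, abs_mul, abs_mul, abs_pow, Nat.abs_cast, Nat.abs_cast]
    rw [hnorm]
    have hmain : |c k| * ((k:ℝ) * |t| ^ (k - 1)) ≤ (C + D * k) * ((k:ℝ) * r ^ (k - 1)) := by
      refine mul_le_mul (hc k) ?_ (by positivity) (hC k)
      exact mul_le_mul_of_nonneg_left (pow_le_pow_left₀ (abs_nonneg t) htr _) (Nat.cast_nonneg k)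
    exact (div_le_div_iff_of_pos_right (factC_pos k)).mpr hmain
  have key : HasDerivAt (fun t : ℝ => ∑' k : ℕ, c k * t ^ k / (Nat.factorial k : ℝ))
      (∑' k : ℕ, c k * ((k:ℝ) * x ^ (k - 1)) / (Nat.factorial k : ℝ)) x := by
    have huniform := tendstoUniformlyOn_tsum_nat
      (f := fun (k : ℕ) (t : ℝ) => c k * ((k:ℝ) * t ^ (k - 1)) / (Nat.factorial k : ℝ))
      (summable_u C D (|x| + 1)) (s := Metric.ball (0:ℝ) (|x| + 1))
      (fun k t ht => by
        refine bnd (|x| + 1) t ?_ k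
        rw [Metric.mem_ball, Real.dist_eq, sub_zero] at ht
        exact ht.le)
    refine hasDerivAt_of_tendstoUniformlyOn (Metric.isOpen_ball) huniform
      (Filter.Eventually.of_forall fun N => fun t _ => ?_)
      (fun t _ => (summable_linbound C D t hc).hasSum.tendsto_sum_nat) ?_
    · exact HasDerivAt.fun_sum fun k _ => ((hasDerivAt_pow k t).const_mul (c k)).div_const _
    · rw [Metric.mem_ball, Real.dist_eq, sub_zero]
      linarith [abs_nonneg x]
  have hg : Summable (fun k : ℕ => c k * ((k:ℝ) * x ^ (k - 1)) / (Nat.factorial k : ℝ)) := by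
    refine Summable.of_norm_bounded (summable_u C D |x|) fun k => bnd |x| x le_rfl k
  have hshift : (∑' k : ℕ, c k * ((k:ℝ) * x ^ (k - 1)) / (Nat.factorial k : ℝ))
      = ∑' k : ℕ, c (k + 1) * x ^ k / (Nat.factorial k : ℝ) := by
    rw [Summable.tsum_eq_zero_add hg]
    simp only [Nat.cast_zero, zero_mul, mul_zero, zero_div, zero_add]
    refine tsum_congr fun k => ?_
    have h1 : ((Nat.factorial k : ℝ)) ≠ 0 := (factC_pos k).ne'
    have h2 : ((k:ℝ) + 1) ≠ 0 := by positivity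
    rw [Nat.add_sub_cancel, Nat.factorial_succ]
    push_cast
    field_simp
  rw [← hshift]
  exact key

lemma tsum_mul_pow_eq (x : ℝ) :
    (∑' k : ℕ, (k : ℝ) * x ^ k / (Nat.factorial k : ℝ)) = x * Real.exp x := by
  rw [Summable.tsum_eq_zero_add (summable_mul_pow x)]
  simp only [Nat.cast_zero, zero_mul, zero_div, zero_add]
  have h : ∀ k : ℕ, ((k + 1 : ℕ) : ℝ) * x ^ (k + 1) / (Nat.factorial (k + 1) : ℝ)
      = x * (x ^ k / (Nat.factorial k : ℝ)) := by
    intro k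
    have h1 : ((Nat.factorial k : ℝ)) ≠ 0 := (factC_pos k).ne'
    have h2 : ((k:ℝ) + 1) ≠ 0 := by positivity
    rw [Nat.factorial_succ]
    push_cast
    field_simp
    ring
  rw [tsum_congr h, tsum_mul_left, exp_tsum]

lemma poissonPMF_nonneg {x : ℝ} (hx : 0 ≤ x) (k : ℕ) : 0 ≤ poissonPMF x k := by
  unfold poissonPMF
  positivity

lemma poissonPMF_pos {x : ℝ} (hx : 0 < x) (k : ℕ) : 0 < poissonPMF x k := by
  unfold poissonPMF
  positivity

lemma outPMF_pos {S : Finset ℝ} {p : ℝ → ℝ} (hSnn : ∀ a ∈ S, 0 ≤ a)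
    (hp : ∀ a ∈ S, 0 < p a) {x₀ : ℝ} (hx₀S : x₀ ∈ S) (hx₀pos : 0 < x₀) (k : ℕ) :
    0 < outPMF S p k := by
  unfold outPMF
  exact Finset.sum_pos' (fun a ha => mul_nonneg (hp a ha).le (poissonPMF_nonneg (hSnn a ha) k))
    ⟨x₀, hx₀S, mul_pos (hp x₀ hx₀S) (poissonPMF_pos hx₀pos k)⟩

lemma fact_mul_outPMF (S : Finset ℝ) (p : ℝ → ℝ) (k : ℕ) :
    (Nat.factorial k : ℝ) * outPMF S p k = ∑ a ∈ S, p a * (a ^ k * Real.exp (-a)) := by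
  unfold outPMF poissonPMF
  rw [Finset.mul_sum]
  refine Finset.sum_congr rfl fun a _ => ?_
  have h1 : ((Nat.factorial k : ℝ)) ≠ 0 := (factC_pos k).ne'
  field_simp

lemma c_bound {A : ℝ} (hA : 0 < A) {S : Finset ℝ} (hS : (S : Set ℝ) ⊆ Set.Icc 0 A)
    {p : ℝ → ℝ} (hp : ∀ x ∈ S, 0 < p x) (hpsum : ∑ x ∈ S, p x = 1)
    {x₀ : ℝ} (hx₀S : x₀ ∈ S) (hx₀pos : 0 < x₀) (k : ℕ) :
    |Real.log ((Nat.factorial k : ℝ) * outPMF S p k)|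
      ≤ (|Real.log (p x₀)| + x₀) + (|Real.log A| + |Real.log x₀|) * k := by
  have hSnn : ∀ a ∈ S, 0 ≤ a := fun a ha => (hS (Finset.mem_coe.mpr ha)).1
  have hOut := outPMF_pos hSnn hp hx₀S hx₀pos k
  have hkf := factC_pos k
  have hpos : 0 < (Nat.factorial k : ℝ) * outPMF S p k := mul_pos hkf hOut
  have hub : (Nat.factorial k : ℝ) * outPMF S p k ≤ A ^ k := by
    rw [fact_mul_outPMF]
    have hterm : ∀ a ∈ S, p a * (a ^ k * Real.exp (-a)) ≤ p a * A ^ k := by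
      intro a ha
      obtain ⟨h0, h1⟩ := hS (Finset.mem_coe.mpr ha)
      have he : Real.exp (-a) ≤ 1 := by
        rw [show (1:ℝ) = Real.exp 0 from (Real.exp_zero).symm]
        exact Real.exp_le_exp.mpr (by linarith)
      have hmain : a ^ k * Real.exp (-a) ≤ A ^ k :=
        calc a ^ k * Real.exp (-a) ≤ a ^ k * 1 :=
              mul_le_mul_of_nonneg_left he (pow_nonneg h0 k)
          _ = a ^ k := mul_one _
          _ ≤ A ^ k := pow_le_pow_left₀ h0 h1 k
      exact mul_le_mul_of_nonneg_left hmain (hp a ha).le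
    exact le_trans (Finset.sum_le_sum hterm)
      (le_of_eq (by rw [← Finset.sum_mul, hpsum, one_mul]))
  have hlb : p x₀ * (x₀ ^ k * Real.exp (-x₀)) ≤ (Nat.factorial k : ℝ) * outPMF S p k := by
    rw [fact_mul_outPMF]
    refine Finset.single_le_sum (f := fun a => p a * (a ^ k * Real.exp (-a))) (fun a ha => ?_) hx₀S
    exact mul_nonneg (hp a ha).le (mul_nonneg (pow_nonneg (hSnn a ha) k) (Real.exp_pos _).le)
  have hlogub : Real.log ((Nat.factorial k : ℝ) * outPMF S p k) ≤ k * Real.log A := by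
    calc Real.log ((Nat.factorial k : ℝ) * outPMF S p k) ≤ Real.log (A ^ k) :=
          Real.log_le_log hpos hub
      _ = k * Real.log A := by rw [Real.log_pow]
  have hloglb : Real.log (p x₀) + ((k:ℝ) * Real.log x₀ - x₀)
      ≤ Real.log ((Nat.factorial k : ℝ) * outPMF S p k) := by
    have h1 : Real.log (p x₀ * (x₀ ^ k * Real.exp (-x₀)))
        = Real.log (p x₀) + ((k:ℝ) * Real.log x₀ - x₀) := by
      rw [Real.log_mul (hp x₀ hx₀S).ne'
          (mul_pos (pow_pos hx₀pos k) (Real.exp_pos _)).ne',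
        Real.log_mul (pow_pos hx₀pos k).ne' (Real.exp_ne_zero _), Real.log_pow, Real.log_exp]
      ring
    rw [← h1]
    exact Real.log_le_log (mul_pos (hp x₀ hx₀S) (mul_pos (pow_pos hx₀pos k) (Real.exp_pos _))) hlb
  have hk : (0:ℝ) ≤ (k:ℝ) := Nat.cast_nonneg k
  rw [abs_le]
  constructor
  · nlinarith [neg_abs_le (Real.log (p x₀)),
      mul_le_mul_of_nonneg_right (neg_abs_le (Real.log x₀)) hk,
      mul_nonneg (abs_nonneg (Real.log A)) hk]
  · nlinarith [mul_le_mul_of_nonneg_right (le_abs_self (Real.log A)) hk,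
      abs_nonneg (Real.log (p x₀)),
      mul_nonneg (abs_nonneg (Real.log x₀)) hk, hx₀pos.le]

lemma relEnt_eq {S : Finset ℝ} {p : ℝ → ℝ} (hOut : ∀ k, 0 < outPMF S p k)
    {x : ℝ} (hx : 0 < x)
    (hsum : Summable (fun k : ℕ =>
      Real.log ((Nat.factorial k : ℝ) * outPMF S p k) * x ^ k / (Nat.factorial k : ℝ))) :
    relEnt S p x = x * Real.log x - x - Real.exp (-x) *
      ∑' k : ℕ, Real.log ((Nat.factorial k : ℝ) * outPMF S p k) * x ^ k / (Nat.factorial k : ℝ)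
    := by
  have hterm : ∀ k : ℕ, poissonPMF x k * Real.log (poissonPMF x k / outPMF S p k)
      = ((k:ℝ) * poissonPMF x k) * Real.log x - x * poissonPMF x k
        - Real.exp (-x) * (Real.log ((Nat.factorial k : ℝ) * outPMF S p k)
            * x ^ k / (Nat.factorial k : ℝ)) := by
    intro k
    have hkf : ((Nat.factorial k : ℝ)) ≠ 0 := (factC_pos k).ne'
    have hppos : 0 < poissonPMF x k := poissonPMF_pos hx k
    have h1 : Real.log (poissonPMF x k)
        = (k:ℝ) * Real.log x - x - Real.log (Nat.factorial k : ℝ) := by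
      unfold poissonPMF
      rw [Real.log_div (by positivity) hkf,
        Real.log_mul (by positivity) (Real.exp_ne_zero _), Real.log_pow, Real.log_exp]
      push_cast
      ring
    have h2 : Real.log ((Nat.factorial k : ℝ) * outPMF S p k)
        = Real.log (Nat.factorial k : ℝ) + Real.log (outPMF S p k) :=
      Real.log_mul hkf (hOut k).ne'
    rw [Real.log_div hppos.ne' (hOut k).ne', h1, h2]
    have h3 : poissonPMF x k = x ^ k * Real.exp (-x) / (Nat.factorial k : ℝ) := rfl
    rw [h3]
    ring
  unfold relEnt
  rw [tsum_congr hterm]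
  have hsP : Summable (fun k : ℕ => poissonPMF x k) := by
    have h : ∀ k : ℕ, (x ^ k / (Nat.factorial k : ℝ)) * Real.exp (-x) = poissonPMF x k :=
      fun k => by unfold poissonPMF; ring
    exact ((Real.summable_pow_div_factorial x).mul_right _).congr h
  have hskP : Summable (fun k : ℕ => (k:ℝ) * poissonPMF x k) := by
    have h : ∀ k : ℕ, ((k:ℝ) * x ^ k / (Nat.factorial k : ℝ)) * Real.exp (-x)
        = (k:ℝ) * poissonPMF x k := fun k => by unfold poissonPMF; ring
    exact ((summable_mul_pow x).mul_right _).congr h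
  have h1 : Summable (fun k : ℕ => ((k:ℝ) * poissonPMF x k) * Real.log x) :=
    hskP.mul_right _
  have h2 : Summable (fun k : ℕ => x * poissonPMF x k) := hsP.mul_left x
  have h3 : Summable (fun k : ℕ => Real.exp (-x) *
      (Real.log ((Nat.factorial k : ℝ) * outPMF S p k) * x ^ k / (Nat.factorial k : ℝ))) :=
    hsum.mul_left _
  rw [Summable.tsum_sub (h1.sub h2) h3, Summable.tsum_sub h1 h2, tsum_mul_right, tsum_mul_left, tsum_mul_left]
  have hP1 : (∑' k : ℕ, poissonPMF x k) = 1 := by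
    have h : ∀ k : ℕ, (x ^ k / (Nat.factorial k : ℝ)) * Real.exp (-x) = poissonPMF x k :=
      fun k => by unfold poissonPMF; ring
    rw [← tsum_congr h, tsum_mul_right, exp_tsum, ← Real.exp_add, add_neg_cancel, Real.exp_zero]
  have hPk : (∑' k : ℕ, (k:ℝ) * poissonPMF x k) = x := by
    have h : ∀ k : ℕ, ((k:ℝ) * x ^ k / (Nat.factorial k : ℝ)) * Real.exp (-x)
        = (k:ℝ) * poissonPMF x k := fun k => by unfold poissonPMF; ring
    rw [← tsum_congr h, tsum_mul_right, tsum_mul_pow_eq, mul_assoc, ← Real.exp_add,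
      add_neg_cancel, Real.exp_zero, mul_one]
  rw [hP1, hPk]
  ring

lemma log_inv_postMean {S : Finset ℝ} {p : ℝ → ℝ} (hOut : ∀ k, 0 < outPMF S p k) (k : ℕ) :
    Real.log (1 / postMean S p (k + 1))
      = Real.log ((Nat.factorial (k + 1) : ℝ) * outPMF S p (k + 1))
        - Real.log ((Nat.factorial (k + 2) : ℝ) * outPMF S p (k + 2)) := by
  have h1 := hOut (k + 1)
  have h2 := hOut (k + 2)
  have hf1 := factC_pos (k + 1)
  have hf2 := factC_pos (k + 2)
  have hnum : (0:ℝ) < ((k + 1 : ℕ) : ℝ) + 1 := by positivity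
  unfold postMean
  have hidx : k + 1 + 1 = k + 2 := rfl
  rw [hidx, one_div, Real.log_inv, Real.log_div (by positivity) h1.ne',
    Real.log_mul hnum.ne' h2.ne', Real.log_mul hf1.ne' h1.ne', Real.log_mul hf2.ne' h2.ne']
  have hfs : ((Nat.factorial (k + 2) : ℝ)) = (((k + 1 : ℕ) : ℝ) + 1) * (Nat.factorial (k + 1) : ℝ) := by
    rw [show k + 2 = (k + 1) + 1 from rfl, Nat.factorial_succ]
    push_cast
    ring
  rw [hfs, Real.log_mul hnum.ne' hf1.ne']
  ring

end RelEntAux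

open RelEntAux

/-- `i = D` is twice differentiable on `(0, ∞)` with
`i''(x) = Σ_k P_{Y|X}(k|x) log (1/m(k+1)) − i'(x) + log x + 1/x`. -/
theorem relEnt_second_derivative
    (A : ℝ) (hA : 0 < A) (S : Finset ℝ) (hS : (S : Set ℝ) ⊆ Set.Icc 0 A)
    (p : ℝ → ℝ) (hp : ∀ x ∈ S, 0 < p x) (hpsum : ∑ x ∈ S, p x = 1)
    (x₀ : ℝ) (hx₀S : x₀ ∈ S) (hx₀pos : 0 < x₀) :
    ∀ x : ℝ, 0 < x →
      DifferentiableAt ℝ (relEnt S p) x ∧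
      DifferentiableAt ℝ (deriv (relEnt S p)) x ∧
      deriv (deriv (relEnt S p)) x =
        (∑' k : ℕ, poissonPMF x k * Real.log (1 / postMean S p (k + 1))) -
          deriv (relEnt S p) x + Real.log x + 1 / x := by
  intro x hx
  have hSnn : ∀ a ∈ S, 0 ≤ a := fun a ha => (hS (Finset.mem_coe.mpr ha)).1
  have hOut : ∀ k, 0 < outPMF S p k := fun k => outPMF_pos hSnn hp hx₀S hx₀pos k
  set c : ℕ → ℝ := fun k => Real.log ((Nat.factorial k : ℝ) * outPMF S p k) with hcdef
  set C : ℝ := |Real.log (p x₀)| + x₀ with hCdef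
  set D : ℝ := |Real.log A| + |Real.log x₀| with hDdef
  have hc : ∀ k, |c k| ≤ C + D * k := fun k => c_bound hA hS hp hpsum hx₀S hx₀pos k
  have hc1 : ∀ k, |c (k + 1)| ≤ (C + D) + D * k := by
    intro k
    have := hc (k + 1)
    push_cast at this
    linarith
  have hc2 : ∀ k, |c (k + 2)| ≤ (C + 2 * D) + D * k := by
    intro k
    have := hc (k + 2)
    push_cast at this
    linarith
  set F : ℝ → ℝ := fun t => ∑' k : ℕ, c k * t ^ k / (Nat.factorial k : ℝ) with hFdef
  set G : ℝ → ℝ := fun t => ∑' k : ℕ, c (k + 1) * t ^ k / (Nat.factorial k : ℝ) with hGdef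
  set H : ℝ → ℝ := fun t => ∑' k : ℕ, c (k + 2) * t ^ k / (Nat.factorial k : ℝ) with hHdef
  have hF : ∀ t : ℝ, HasDerivAt F (G t) t := fun t => hasDerivAt_tsum_pow C D hc t
  have hG : ∀ t : ℝ, HasDerivAt G (H t) t := fun t =>
    hasDerivAt_tsum_pow (C + D) D hc1 t
  have hexp : ∀ t : ℝ, HasDerivAt (fun s : ℝ => Real.exp (-s)) (-Real.exp (-t)) t := by
    intro t
    have := (hasDerivAt_neg' (x := t)).exp
    simpa using this
  have heq : ∀ t : ℝ, 0 < t → relEnt S p t = t * Real.log t - t - Real.exp (-t) * F t :=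
    fun t ht => relEnt_eq hOut ht (summable_linbound C D t hc)
  have hEphi : ∀ t : ℝ, 0 < t →
      HasDerivAt (relEnt S p) (Real.log t - Real.exp (-t) * (G t - F t)) t := by
    intro t ht
    have h1 : HasDerivAt (fun s : ℝ => s * Real.log s) (Real.log t + 1) t :=
      Real.hasDerivAt_mul_log ht.ne'
    have h4 : HasDerivAt (fun s : ℝ => s * Real.log s - s - Real.exp (-s) * F s)
        ((Real.log t + 1) - 1 - (-Real.exp (-t) * F t + Real.exp (-t) * G t)) t :=
      (h1.sub (hasDerivAt_id t)).sub ((hexp t).mul (hF t))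
    have hev : relEnt S p =ᶠ[nhds t] fun s : ℝ => s * Real.log s - s - Real.exp (-s) * F s :=
      Filter.eventuallyEq_of_mem (isOpen_Ioi.mem_nhds ht) fun s hs => heq s hs
    have h5 := h4.congr_of_eventuallyEq hev
    have hval : Real.log t - Real.exp (-t) * (G t - F t)
        = (Real.log t + 1) - 1 - (-Real.exp (-t) * F t + Real.exp (-t) * G t) := by ring
    rw [hval]
    exact h5
  have hdR : ∀ t : ℝ, 0 < t →
      deriv (relEnt S p) t = Real.log t - Real.exp (-t) * (G t - F t) :=
    fun t ht => (hEphi t ht).deriv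
  have hpsi : HasDerivAt (fun s : ℝ => Real.log s - Real.exp (-s) * (G s - F s))
      (x⁻¹ - (-Real.exp (-x) * (G x - F x) + Real.exp (-x) * (H x - G x))) x :=
    (Real.hasDerivAt_log hx.ne').sub ((hexp x).mul ((hG x).sub (hF x)))
  have hev2 : deriv (relEnt S p) =ᶠ[nhds x] fun s : ℝ => Real.log s - Real.exp (-s) * (G s - F s) :=
    Filter.eventuallyEq_of_mem (isOpen_Ioi.mem_nhds hx) fun s hs => hdR s hs
  have hD2 : HasDerivAt (deriv (relEnt S p))
      (x⁻¹ - (-Real.exp (-x) * (G x - F x) + Real.exp (-x) * (H x - G x))) x :=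
    hpsi.congr_of_eventuallyEq hev2
  refine ⟨(hEphi x hx).differentiableAt, hD2.differentiableAt, ?_⟩
  rw [hD2.deriv]
  have hT : (∑' k : ℕ, poissonPMF x k * Real.log (1 / postMean S p (k + 1)))
      = Real.exp (-x) * (G x - H x) := by
    have h1 : ∀ k : ℕ, poissonPMF x k * Real.log (1 / postMean S p (k + 1))
        = Real.exp (-x) * (c (k + 1) * x ^ k / (Nat.factorial k : ℝ)
            - c (k + 2) * x ^ k / (Nat.factorial k : ℝ)) := by
      intro k
      rw [log_inv_postMean hOut k]
      simp only [hcdef]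
      unfold poissonPMF
      ring
    rw [tsum_congr h1, tsum_mul_left,
      Summable.tsum_sub (summable_linbound (C + D) D x hc1) (summable_linbound (C + 2 * D) D x hc2)]
  rw [hT, hdR x hx]
  ring
end
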